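/- arXiv:2510.10291 — 3 statements merged into one kernel-verified Lean document; each statement's English description precedes it below -/
import Mathlib

section
/- Let Γ* = ⟨Γ, t | t⁻¹ht = φ(h) for h ∈ H₁⟩ be the HNN extension of a finitely generated group Γ relative to an isomorphism φ : H₁ → H₂ between subgroups of Γ, with generating set S = F ∪ {t, t⁻¹} where F generates Γ. Then in the Schreier graph Sch(Γ*, H₁, S), every path from the vertex H₁t to the vertex H₁t⁻¹ passes through the vertex H₁. -/
/-- The Schreier graph of a group `Γ` with respect to a subgroup `H` and a set `S`:
vertices are the right cosets `Hg`, with an edge between `Hg` and `Hgs` for `s ∈ S`. -/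
def schreierGraph {Γ : Type*} [Group Γ] (H : Subgroup Γ) (S : Set Γ) :
    SimpleGraph (Quotient (QuotientGroup.rightRel H)) where
  Adj x y := x ≠ y ∧ ∃ s ∈ S, ∃ g : Γ,
      (x = Quotient.mk _ g ∧ y = Quotient.mk _ (g * s)) ∨
      (y = Quotient.mk _ g ∧ x = Quotient.mk _ (g * s))
  symm := by constructor; rintro x y ⟨hne, s, hs, g, h⟩; exact ⟨hne.symm, s, hs, g, h.symm⟩
  loopless := by constructor; rintro x ⟨hne, _⟩; exact hne rfl

open HNNExtension HNNExtension.NormalWord List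

namespace Stmt17Aux

variable {G : Type*} [Group G] {A B : Subgroup G} {φ : A ≃* B}

/-- plain product of a head and list of letters -/
def pr (φ : A ≃* B) (h : G) (L : List (ℤˣ × G)) : HNNExtension G A B φ :=
  of h * (L.map fun x => t ^ (x.1 : ℤ) * of x.2).prod

lemma prod_eq_pr (h : G) (L : List (ℤˣ × G)) (ch) :
    (⟨h, L, ch⟩ : ReducedWord G A B).prod φ = pr φ h L := rfl

lemma pr_concat (h : G) (L : List (ℤˣ × G)) (c : ℤˣ × G) :
    pr φ h (L ++ [c]) = pr φ h L * (t ^ (c.1 : ℤ) * of c.2) := by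
  simp [pr, mul_assoc]

/-- the chain relation used in reduced words -/
abbrev R (A B : Subgroup G) : ℤˣ × G → ℤˣ × G → Prop :=
  fun a b => a.2 ∈ toSubgroup A B a.1 → a.1 = b.1

lemma chain_mod_last {L : List (ℤˣ × G)} {v : ℤˣ} {x x' : G}
    (ch : List.IsChain (R A B) (L ++ [(v, x)])) :
    List.IsChain (R A B) (L ++ [(v, x')]) := by
  rw [List.isChain_append] at ch ⊢
  exact ⟨ch.1, List.isChain_singleton _, fun p hp q hq => by
    simp only [List.head?_cons, Option.mem_def, Option.some_inj] at hq
    subst hq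
    exact ch.2.2 p hp (v, x) (by simp)⟩

lemma chain_snoc {L : List (ℤˣ × G)} {v : ℤˣ} {x : G} {u : ℤˣ} {y : G}
    (ch : List.IsChain (R A B) (L ++ [(v, x)]))
    (hj : x ∈ toSubgroup A B v → v = u) :
    List.IsChain (R A B) ((L ++ [(v, x)]) ++ [(u, y)]) := by
  rw [List.isChain_append]
  refine ⟨ch, List.isChain_singleton _, fun p hp q hq => ?_⟩
  simp only [List.head?_cons, Option.mem_def, Option.some_inj] at hq
  rw [List.getLast?_append_of_ne_nil _ (by simp), List.getLast?_singleton,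
    Option.mem_def, Option.some_inj] at hp
  subst hp hq
  exact hj

lemma tpow_conj (v : ℤˣ) (x : toSubgroup A B v) :
    (t ^ (v : ℤ) * of (x : G) * t ^ ((-v : ℤˣ) : ℤ) : HNNExtension G A B φ) =
      of (toSubgroupEquiv φ v x : G) := by
  rcases Int.units_eq_one_or v with rfl | rfl
  · simp; exact (equiv_eq_conj (φ := φ) x).symm
  · simp; exact (equiv_symm_eq_conj (φ := φ) x).symm

/-- `Q g` : any reduced form of `g` starts with an element of `A` followed by `t⁻¹`. -/
def Q (φ : A ≃* B) (g : HNNExtension G A B φ) : Prop :=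
  ∃ w : ReducedWord G A B, w.prod φ = g ∧ w.head ∈ A ∧
    (w.toList.map Prod.fst).head? = some (-1)

lemma Q_t_inv : Q φ (t : HNNExtension G A B φ)⁻¹ := by
  refine ⟨⟨1, [(-1, 1)], List.isChain_singleton _⟩, ?_, one_mem _, rfl⟩
  simp [ReducedWord.prod]

lemma not_Q_t : ¬ Q φ (t : HNNExtension G A B φ) := by
  rintro ⟨w, hprod, hA, hhead⟩
  have h2 : (⟨1, [((1 : ℤˣ), (1 : G))], List.isChain_singleton _⟩ :
      ReducedWord G A B).prod φ = t := by
    simp [ReducedWord.prod]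
  have h3 := (ReducedWord.map_fst_eq_and_of_prod_eq φ (hprod.trans h2.symm)).1
  rw [h3] at hhead
  simp only [List.map_cons, List.map_nil, List.head?_cons, Option.some_inj] at hhead
  have := congrArg Units.val hhead
  simp at this

lemma Q_of_mul {g : HNNExtension G A B φ} {a : G} (ha : a ∈ A) (hQ : Q φ g) :
    Q φ (of a * g) := by
  obtain ⟨⟨h, L, ch⟩, hprod, hA, hhead⟩ := hQ
  exact ⟨⟨a * h, L, ch⟩, by
      rw [prod_eq_pr] at hprod ⊢
      simp [pr, map_mul, mul_assoc, ← hprod, prod_eq_pr], mul_mem ha hA, hhead⟩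

lemma Q_mul_of {g : HNNExtension G A B φ} (f : G) (hQ : Q φ g) : Q φ (g * of f) := by
  obtain ⟨⟨h, L, ch⟩, hprod, hA, hhead⟩ := hQ
  rcases L.eq_nil_or_concat' with rfl | ⟨L', ⟨v, x⟩, rfl⟩
  · simp at hhead
  refine ⟨⟨h, L' ++ [(v, x * f)], chain_mod_last ch⟩, ?_, hA, ?_⟩
  · rw [prod_eq_pr, pr_concat, ← hprod, prod_eq_pr, pr_concat]
    simp [map_mul, mul_assoc]
  · have : ((L' ++ [(v, x * f)]).map Prod.fst) = ((L' ++ [(v, x)]).map Prod.fst) := by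
      simp
    rw [this]; exact hhead

lemma Q_mul_tpow {g : HNNExtension G A B φ} (u : ℤˣ) (hQ : Q φ g)
    (hn : g * t ^ (u : ℤ) ∉ A.map (of : G →* HNNExtension G A B φ)) :
    Q φ (g * t ^ (u : ℤ)) := by
  obtain ⟨⟨h, L, ch⟩, hprod, hA, hhead⟩ := hQ
  rcases L.eq_nil_or_concat' with rfl | ⟨L', ⟨v, x⟩, rfl⟩
  · simp at hhead
  by_cases hc : x ∈ toSubgroup A B v ∧ v = -u
  · obtain ⟨hx, hvu⟩ := hc
    have hu : u = -v := by rw [hvu]; simp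
    subst hu
    have key := tpow_conj (φ := φ) v ⟨x, hx⟩
    rcases L'.eq_nil_or_concat' with rfl | ⟨L'', ⟨v', x'⟩, rfl⟩
    · -- the result is in the subgroup `A`: contradiction
      exfalso
      have hv : v = -1 := by simpa using hhead
      subst hv
      apply hn
      refine ⟨h * (toSubgroupEquiv φ (-1) ⟨x, hx⟩ : G), ?_, ?_⟩
      · exact mul_mem hA (by simpa using (toSubgroupEquiv φ (-1) ⟨x, hx⟩).2)
      · rw [← hprod, prod_eq_pr]
        show _ = pr φ h ([] ++ [((-1 : ℤˣ), x)]) * _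
        rw [pr_concat, map_mul, ← key]
        simp only [pr, List.map_nil, List.prod_nil, mul_one, mul_assoc]
    · refine ⟨⟨h, L'' ++ [(v', x' * (toSubgroupEquiv φ v ⟨x, hx⟩ : G))],
        chain_mod_last (x := x') (ch.prefix (List.prefix_append _ _))⟩, ?_, hA, ?_⟩
      · rw [prod_eq_pr, pr_concat, ← hprod, prod_eq_pr, pr_concat, pr_concat, map_mul,
          ← key]
        simp only [mul_assoc]
      · have h1 : ((L'' ++ [(v', x' * (toSubgroupEquiv φ v ⟨x, hx⟩ : G))]).map Prod.fst) =
            ((L'' ++ [(v', x')]).map Prod.fst) := by simp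
        rw [h1]
        have h2 : (((L'' ++ [(v', x')]) ++ [(v, x)]).map Prod.fst).head? =
            (((L'' ++ [(v', x')])).map Prod.fst).head? := by
          rw [List.map_append, List.head?_append_of_ne_nil _ (by simp)]
        rw [← h2]; exact hhead
  · -- no cancellation : append `(u, 1)`
    push_neg at hc
    refine ⟨⟨h, (L' ++ [(v, x)]) ++ [(u, 1)], chain_snoc ch (fun hx => ?_)⟩, ?_, hA, ?_⟩
    · by_contra hvu
      exact (hc hx) ((Int.units_ne_iff_eq_neg).1 hvu)
    · rw [prod_eq_pr, pr_concat, ← hprod, prod_eq_pr]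
      simp
    · rw [List.map_append, List.head?_append_of_ne_nil _ (by simp)]
      exact hhead


lemma mk_eq_mk_iff {Γ : Type*} [Group Γ] {H : Subgroup Γ} {x y : Γ} :
    Quotient.mk (QuotientGroup.rightRel H) x = Quotient.mk (QuotientGroup.rightRel H) y ↔
      y * x⁻¹ ∈ H := by
  constructor
  · intro hxy
    exact QuotientGroup.rightRel_apply.1 (Quotient.exact hxy)
  · intro hxy
    exact Quotient.sound (QuotientGroup.rightRel_apply.2 hxy)

end Stmt17Aux

open HNNExtension in
/-- In the HNN extension `Γ* = ⟨Γ, t | t⁻¹ht = φ(h)⟩` with generating set `S = F ∪ {t,t⁻¹}`,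
every path in the Schreier graph of `H₁` from the vertex `H₁t` to the vertex `H₁t⁻¹` passes
through the vertex `H₁`. -/
theorem stmt_17 {G : Type*} [Group G] (A B : Subgroup G) (φ : A ≃* B)
    (F : Finset G) (hsym : ∀ s ∈ F, s⁻¹ ∈ F) (hgen : Subgroup.closure (F : Set G) = ⊤)
    (Hsub : Subgroup (HNNExtension G A B φ))
    (hHsub : Hsub = A.map (of : G →* HNNExtension G A B φ))
    (S : Set (HNNExtension G A B φ))
    (hS : S = (of : G →* HNNExtension G A B φ) '' (F : Set G) ∪
      {t, (t : HNNExtension G A B φ)⁻¹}) :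
    ∀ p : (schreierGraph Hsub S).Walk
        (Quotient.mk (QuotientGroup.rightRel Hsub) (t : HNNExtension G A B φ))
        (Quotient.mk (QuotientGroup.rightRel Hsub) (t : HNNExtension G A B φ)⁻¹),
      Quotient.mk (QuotientGroup.rightRel Hsub) (1 : HNNExtension G A B φ) ∈ p.support := by
  subst hHsub hS
  set Hsub : Subgroup (HNNExtension G A B φ) := A.map (of : G →* HNNExtension G A B φ) with hH
  intro p
  -- the set S is closed under inverses
  have Ssymm : ∀ s ∈ ((of : G →* HNNExtension G A B φ) '' (F : Set G) ∪
      {t, (t : HNNExtension G A B φ)⁻¹}), s⁻¹ ∈ ((of : G →* HNNExtension G A B φ) '' (F : Set G) ∪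
      {t, (t : HNNExtension G A B φ)⁻¹}) := by
    rintro s (⟨f, hf, rfl⟩ | hs)
    · exact Or.inl ⟨f⁻¹, hsym f hf, by simp⟩
    · rcases hs with rfl | rfl
      · exact Or.inr (Or.inr rfl)
      · exact Or.inr (Or.inl (by simp))
  -- one step of the invariant
  have step : ∀ (g s : HNNExtension G A B φ),
      s ∈ ((of : G →* HNNExtension G A B φ) '' (F : Set G) ∪
        {t, (t : HNNExtension G A B φ)⁻¹}) →
      Stmt17Aux.Q φ g → g * s ∉ Hsub → Stmt17Aux.Q φ (g * s) := by
    rintro g s (⟨f, hf, rfl⟩ | hs) hQ hn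
    · exact Stmt17Aux.Q_mul_of f hQ
    · rcases hs with rfl | rfl
      · have ht : (t : HNNExtension G A B φ) = t ^ (((1 : ℤˣ) : ℤ)) := by simp
        rw [ht] at hn ⊢
        exact Stmt17Aux.Q_mul_tpow 1 hQ hn
      · have ht : (t : HNNExtension G A B φ)⁻¹ = t ^ ((((-1) : ℤˣ) : ℤ)) := by simp
        rw [ht] at hn ⊢
        exact Stmt17Aux.Q_mul_tpow (-1) hQ hn
  -- main induction along the walk
  have key : ∀ (y z : Quotient (QuotientGroup.rightRel Hsub))
      (q : (schreierGraph Hsub ((of : G →* HNNExtension G A B φ) '' (F : Set G) ∪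
        {t, (t : HNNExtension G A B φ)⁻¹})).Walk y z),
      (∃ g, Stmt17Aux.Q φ g ∧ y = Quotient.mk (QuotientGroup.rightRel Hsub) g) →
      Quotient.mk (QuotientGroup.rightRel Hsub) (1 : HNNExtension G A B φ) ∈ q.support ∨
        ∃ g, Stmt17Aux.Q φ g ∧ z = Quotient.mk (QuotientGroup.rightRel Hsub) g := by
    intro y z q
    induction q with
    | nil => exact fun h => Or.inr h
    | @cons y y' z hadj q ih =>
      rintro ⟨g, hQ, rfl⟩
      by_cases h1 : Quotient.mk (QuotientGroup.rightRel Hsub) (1 : HNNExtension G A B φ) = y'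
      · left
        rw [SimpleGraph.Walk.support_cons]
        exact List.mem_cons_of_mem _ (h1 ▸ q.start_mem_support)
      · obtain ⟨hne, s, hsS, g', hor⟩ := hadj
        have hrep : ∃ g'', Stmt17Aux.Q φ g'' ∧
            y' = Quotient.mk (QuotientGroup.rightRel Hsub) g'' := by
          rcases hor with ⟨hy, hy'⟩ | ⟨hy', hy⟩
          · -- y = mk g', y' = mk (g' * s)
            obtain ⟨a, haA, ha⟩ := Stmt17Aux.mk_eq_mk_iff.1 (hy ▸ rfl :
              Quotient.mk (QuotientGroup.rightRel Hsub) g =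
                Quotient.mk (QuotientGroup.rightRel Hsub) g')
            have hg' : g' = of a * g := by rw [ha]; group
            have hQ' : Stmt17Aux.Q φ g' := hg' ▸ Stmt17Aux.Q_of_mul haA hQ
            have hn : g' * s ∉ Hsub := by
              intro hmem
              exact h1 (by
                rw [hy']
                exact (Stmt17Aux.mk_eq_mk_iff.2 (by simpa using inv_mem hmem)).symm)
            exact ⟨g' * s, step g' s hsS hQ' hn, hy'⟩
          · -- y' = mk g', y = mk (g' * s)
            obtain ⟨a, haA, ha⟩ := Stmt17Aux.mk_eq_mk_iff.1 (hy ▸ rfl :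
              Quotient.mk (QuotientGroup.rightRel Hsub) g =
                Quotient.mk (QuotientGroup.rightRel Hsub) (g' * s))
            have hg' : g' * s = of a * g := by rw [ha]; group
            have hQ' : Stmt17Aux.Q φ (g' * s) := hg' ▸ Stmt17Aux.Q_of_mul haA hQ
            have hn : (g' * s) * s⁻¹ ∉ Hsub := by
              intro hmem
              rw [mul_inv_cancel_right] at hmem
              exact h1 (by
                rw [hy']
                exact (Stmt17Aux.mk_eq_mk_iff.2 (by simpa using inv_mem hmem)).symm)
            have := step (g' * s) s⁻¹ (Ssymm s hsS) hQ' hn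
            rw [mul_inv_cancel_right] at this
            exact ⟨g', this, hy'⟩
        rcases ih hrep with h | h
        · left
          exact List.mem_cons_of_mem _ h
        · right; exact h
  rcases key _ _ p.reverse ⟨t⁻¹, Stmt17Aux.Q_t_inv, rfl⟩ with h | ⟨g, hQ, hg⟩
  · rw [SimpleGraph.Walk.support_reverse, List.mem_reverse] at h
    exact h
  · exfalso
    obtain ⟨a, haA, ha⟩ := Stmt17Aux.mk_eq_mk_iff.1 hg
    have : (t : HNNExtension G A B φ) = of a⁻¹ * g := by
      rw [map_inv, ha]; group
    exact Stmt17Aux.not_Q_t (φ := φ) (this ▸ Stmt17Aux.Q_of_mul (inv_mem haA) hQ)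
end

section
/- Every finitely generated group quasi-isometric to the hyperbolic plane (equivalently, quasi-isometric to the pentagon model graph) is extraterrestrial. -/
open SimpleGraph Pointwise

/-- An `(m,k,r)`-UFO in a graph `G`: a triple `(U,F,O)` of disjoint finite vertex sets such that
`|U| ≥ m|F|`, there is a complete matching between `U` and `O` by paths of length at most `k`,
and every path from `U` to `O` avoiding `F` has length at least `r`. -/
def IsUFO {V : Type*} (G : SimpleGraph V) (m k r : ℕ) (U F O : Set V) : Prop :=
  U.Nonempty ∧ U.Finite ∧ F.Finite ∧ O.Finite ∧
    Disjoint U F ∧ Disjoint U O ∧ Disjoint F O ∧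
    m * F.ncard ≤ U.ncard ∧
    (∃ f : V → V, Set.BijOn f U O ∧ ∀ u ∈ U, G.Reachable u (f u) ∧ G.dist u (f u) ≤ k) ∧
    ∀ u ∈ U, ∀ o ∈ O, ∀ p : G.Walk u o, (∀ x ∈ p.support, x ∉ F) → r ≤ p.length

/-- A graph is extraterrestrial if for all `m` there is `k` such that for all `r` it admits an
`(m,k,r)`-UFO. -/
def Extraterrestrial {V : Type*} (G : SimpleGraph V) : Prop :=
  ∀ m : ℕ, ∃ k : ℕ, ∀ r : ℕ, ∃ U F O : Set V, IsUFO G m k r U F O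
/-- The Cayley graph of a group with respect to a (symmetric) set `S`. -/
def cayleyGraph (Γ : Type*) [Group Γ] (S : Set Γ) : SimpleGraph Γ where
  Adj g h := g ≠ h ∧ (g⁻¹ * h ∈ S ∨ h⁻¹ * g ∈ S)
  symm := ⟨by rintro g h ⟨hne, hs⟩; exact ⟨hne.symm, hs.symm⟩⟩
  loopless := ⟨by rintro g ⟨hne, _⟩; exact hne rfl⟩
/-- The pentagon model: the graph with vertex set `ℤ²`, edges `{(m,n),(m+1,n)}` and
`{(m,n),(2m,n-1)}`. -/
def pentagonGraph : SimpleGraph (ℤ × ℤ) where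
  Adj p q := p ≠ q ∧
    ((p.2 = q.2 ∧ (q.1 = p.1 + 1 ∨ p.1 = q.1 + 1)) ∨
      (q.2 = p.2 - 1 ∧ q.1 = 2 * p.1) ∨ (p.2 = q.2 - 1 ∧ p.1 = 2 * q.1))
  symm := ⟨by
    rintro p q ⟨hne, h⟩
    refine ⟨hne.symm, ?_⟩
    rcases h with ⟨h1, h2⟩ | h | h
    · exact Or.inl ⟨h1.symm, h2.symm⟩
    · exact Or.inr (Or.inr h)
    · exact Or.inr (Or.inl h)⟩
  loopless := ⟨by rintro p ⟨hne, _⟩; exact hne rfl⟩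
namespace PentAux

lemma adj_right (x n : ℤ) : pentagonGraph.Adj (x, n) (x + 1, n) := by
  refine ⟨?_, Or.inl ⟨rfl, Or.inl rfl⟩⟩
  intro h; rw [Prod.mk.injEq] at h; omega

lemma adj_down (x n : ℤ) : pentagonGraph.Adj (x, n) (2 * x, n - 1) := by
  refine ⟨?_, Or.inr (Or.inl ⟨rfl, rfl⟩)⟩
  intro h; rw [Prod.mk.injEq] at h; omega

lemma adj_level {p q : ℤ × ℤ} (h : pentagonGraph.Adj p q) : (p.2 - q.2).natAbs ≤ 1 := by
  obtain ⟨-, h⟩ := h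
  rcases h with ⟨h, -⟩ | ⟨h, -⟩ | ⟨h, -⟩ <;> omega

/-- real position of a pentagon vertex -/
noncomputable def rp (p : ℤ × ℤ) : ℝ := (p.1 : ℝ) * (2 : ℝ) ^ p.2

lemma two_zpow_pos (n : ℤ) : (0:ℝ) < (2:ℝ) ^ n := zpow_pos (by norm_num) n

lemma adj_rp {p q : ℤ × ℤ} (h : pentagonGraph.Adj p q) : |rp p - rp q| ≤ (2:ℝ) ^ p.2 := by
  obtain ⟨-, h⟩ := h
  have h2 : (0:ℝ) < (2:ℝ) ^ p.2 := two_zpow_pos _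
  rcases h with ⟨h1, h2'⟩ | ⟨h1, h2'⟩ | ⟨h1, h2'⟩
  · rcases h2' with h3 | h3 <;>
    · rw [rp, rp, ← h1, h3]
      push_cast
      rw [abs_le]
      constructor <;> nlinarith
  · have : rp q = rp p := by
      rw [rp, rp, h1, h2']
      push_cast
      rw [zpow_sub_one₀ (by norm_num : (2:ℝ) ≠ 0)]
      ring
    rw [this]; simpa using le_of_lt h2
  · have : rp p = rp q := by
      rw [rp, rp, h1, h2']
      push_cast
      rw [zpow_sub_one₀ (by norm_num : (2:ℝ) ≠ 0)]
      ring
    rw [this]; simpa using le_of_lt h2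

lemma walk_level {p q : ℤ × ℤ} (w : pentagonGraph.Walk p q) :
    (p.2 - q.2).natAbs ≤ w.length := by
  induction w with
  | nil => simp
  | @cons a b c h w ih =>
      have h1 := adj_level h
      rw [Walk.length_cons]
      omega

lemma walk_rp {p q : ℤ × ℤ} (w : pentagonGraph.Walk p q) :
    |rp p - rp q| ≤ (2:ℝ) ^ p.2 * (2 ^ w.length - 1) := by
  induction w with
  | nil => simp
  | @cons a b c h w ih =>
      rw [Walk.length_cons]
      have e1 : |rp a - rp c| ≤ |rp a - rp b| + |rp b - rp c| := abs_sub_le _ _ _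
      have e2 := adj_rp h
      have hl := adj_level h
      have e4 : (2:ℝ) ^ b.2 ≤ (2:ℝ) ^ a.2 * 2 := by
        rw [← zpow_add_one₀ (by norm_num : (2:ℝ) ≠ 0)]
        apply zpow_le_zpow_right₀ (by norm_num : (1:ℝ) ≤ 2)
        omega
      have e5 : (1:ℝ) ≤ 2 ^ w.length := one_le_pow₀ (by norm_num)
      have e6 : rp b - rp c ≤ |rp b - rp c| := le_abs_self _
      have e7 : |rp b - rp c| ≤ (2:ℝ) ^ b.2 * (2 ^ w.length - 1) := ih
      have e8 : (2:ℝ) ^ b.2 * (2 ^ w.length - 1) ≤ ((2:ℝ) ^ a.2 * 2) * (2 ^ w.length - 1) :=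
        mul_le_mul_of_nonneg_right e4 (by linarith)
      have e9 : (2:ℝ) ^ (w.length + 1) = 2 ^ w.length * 2 := pow_succ 2 _
      rw [e9]
      have h2 : (0:ℝ) < (2:ℝ) ^ a.2 := two_zpow_pos _
      nlinarith

lemma walk_horiz : ∀ (c : ℕ) (x y n : ℤ), y - x = c →
    ∃ w : pentagonGraph.Walk (x, n) (y, n), w.length = c := by
  intro c
  induction c with
  | zero => intro x y n h; have : y = x := by omega
            subst this; exact ⟨Walk.nil, rfl⟩
  | succ c ih =>
      intro x y n h
      obtain ⟨w, hw⟩ := ih (x+1) y n (by push_cast at h ⊢; omega)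
      exact ⟨Walk.cons (adj_right x n) w, by simp [hw]⟩

lemma dist_horiz (x y n : ℤ) : pentagonGraph.dist (x, n) (y, n) ≤ (y - x).natAbs ∧
    pentagonGraph.Reachable (x, n) (y, n) := by
  rcases le_total x y with hxy | hxy
  · obtain ⟨w, hw⟩ := walk_horiz (y - x).natAbs x y n (by omega)
    exact ⟨hw ▸ SimpleGraph.dist_le w, ⟨w⟩⟩
  · obtain ⟨w, hw⟩ := walk_horiz (y - x).natAbs y x n (by omega)
    refine ⟨?_, ⟨w.reverse⟩⟩
    rw [SimpleGraph.dist_comm]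
    exact hw ▸ SimpleGraph.dist_le w

lemma reach_down : ∀ (c : ℕ) (n : ℤ), pentagonGraph.Reachable (0, n) (0, n - c) := by
  intro c
  induction c with
  | zero =>
      intro n
      simp only [Nat.cast_zero, sub_zero]
      exact SimpleGraph.Reachable.refl _
  | succ c ih =>
      intro n
      refine (ih n).trans ?_
      have h := adj_down 0 (n - c)
      have h2 : n - (c+1 : ℕ) = (n - c) - 1 := by push_cast; ring
      rw [h2]
      simpa using h.reachable

lemma pent_conn : pentagonGraph.Connected := by
  rw [SimpleGraph.connected_iff]
  refine ⟨?_, ⟨(0,0)⟩⟩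
  have axis : ∀ p : ℤ × ℤ, pentagonGraph.Reachable p (0, p.2) := by
    intro p
    have := (dist_horiz p.1 0 p.2).2
    simpa using this
  have vert : ∀ n : ℤ, pentagonGraph.Reachable (0, n) ((0 : ℤ), (0 : ℤ)) := by
    intro n
    rcases le_total 0 n with h | h
    · have := reach_down n.toNat n
      have h2 : n - (n.toNat : ℤ) = 0 := by omega
      rw [h2] at this
      exact this
    · have := reach_down (-n).toNat 0
      have h2 : (0:ℤ) - ((-n).toNat : ℤ) = n := by omega
      rw [h2] at this
      exact this.symm
  intro p q
  exact ((axis p).trans (vert p.2)).trans (((axis q).trans (vert q.2)).symm)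

lemma level_le_dist (p q : ℤ × ℤ) : (p.2 - q.2).natAbs ≤ pentagonGraph.dist p q := by
  obtain ⟨w, hw⟩ := pent_conn.exists_walk_length_eq_dist p q
  exact hw ▸ walk_level w

lemma rp_le_dist (p q : ℤ × ℤ) :
    |rp p - rp q| ≤ (2:ℝ) ^ p.2 * (2 ^ (pentagonGraph.dist p q) - 1) := by
  obtain ⟨w, hw⟩ := pent_conn.exists_walk_length_eq_dist p q
  exact hw ▸ walk_rp w

/-- crossing lemma: a pentagon walk from negative side to positive side hits the axis -/
lemma adj_sign {p q : ℤ × ℤ} (h : pentagonGraph.Adj p q) (hp : p.1 < 0) : q.1 ≤ 0 := by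
  obtain ⟨-, h⟩ := h
  rcases h with ⟨-, h⟩ | ⟨-, h⟩ | ⟨-, h⟩ <;> omega

lemma pent_cross {p q : ℤ × ℤ} (w : pentagonGraph.Walk p q) :
    p.1 < 0 → 0 < q.1 → ∃ z ∈ w.support, z.1 = 0 := by
  induction w with
  | nil => intro hp hq; omega
  | @cons a b c h w ih =>
      intro hp hq
      rcases lt_trichotomy b.1 0 with hb | hb | hb
      · obtain ⟨z, hz, hz0⟩ := ih hb hq
        exact ⟨z, by simp [hz], hz0⟩
      · exact ⟨b, by simp [Walk.support_cons, w.start_mem_support], hb⟩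
      · have := adj_sign h hp; omega

end PentAux


namespace CayAux

variable {Γ : Type*} [Group Γ] (S : Finset Γ)

lemma cay_adj_iff (hsym : ∀ s ∈ S, s⁻¹ ∈ S) {g h : Γ} :
    (cayleyGraph Γ (S : Set Γ)).Adj g h ↔ g ≠ h ∧ g⁻¹ * h ∈ S := by
  constructor
  · rintro ⟨hne, hor | hor⟩
    · exact ⟨hne, hor⟩
    · refine ⟨hne, ?_⟩
      have := hsym _ hor
      simpa [mul_inv_rev] using this
  · rintro ⟨hne, hs⟩
    exact ⟨hne, Or.inl hs⟩

def mulHom (a : Γ) : cayleyGraph Γ (S : Set Γ) →g cayleyGraph Γ (S : Set Γ) where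
  toFun g := a * g
  map_rel' := by
    rintro u v ⟨hne, h⟩
    refine ⟨fun e => hne (mul_left_cancel e), ?_⟩
    simpa [mul_inv_rev, mul_assoc] using h

lemma reach_mul (a : Γ) {u v : Γ} (h : (cayleyGraph Γ (S : Set Γ)).Reachable u v) :
    (cayleyGraph Γ (S : Set Γ)).Reachable (a * u) (a * v) :=
  h.map (mulHom S a)

lemma cay_conn (hsym : ∀ s ∈ S, s⁻¹ ∈ S) (hgen : Subgroup.closure (S : Set Γ) = ⊤) :
    (cayleyGraph Γ (S : Set Γ)).Connected := by
  rw [SimpleGraph.connected_iff]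
  have key : ∀ g : Γ, (cayleyGraph Γ (S : Set Γ)).Reachable 1 g := by
    intro g
    have hg : g ∈ Subgroup.closure (S : Set Γ) := by rw [hgen]; exact Subgroup.mem_top g
    refine Subgroup.closure_induction (p := fun x _ => (cayleyGraph Γ (S : Set Γ)).Reachable 1 x)
      ?_ ?_ ?_ ?_ hg
    · intro x hx
      by_cases hx1 : x = 1
      · rw [hx1]
      · refine SimpleGraph.Adj.reachable ⟨fun e => hx1 e.symm, Or.inl ?_⟩
        simpa using hx
    · rfl
    · intro x y _ _ rx ry
      refine rx.trans ?_
      have := reach_mul S x ry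
      simpa using this
    · intro x _ rx
      have := reach_mul S x⁻¹ rx
      simp only [mul_one, inv_mul_cancel] at this
      exact this.symm
  refine ⟨fun p q => (key p).symm.trans (key q), ⟨1⟩⟩

lemma walk_mem_pow (hsym : ∀ s ∈ S, s⁻¹ ∈ S) [DecidableEq Γ] :
    ∀ {g h : Γ} (w : (cayleyGraph Γ (S : Set Γ)).Walk g h),
      g⁻¹ * h ∈ (insert (1:Γ) S) ^ w.length := by
  intro g h w
  induction w with
  | nil => simp [Finset.mem_one]
  | @cons a b c h w ih =>
      rw [Walk.length_cons, pow_succ']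
      have h1 : a⁻¹ * b ∈ insert (1:Γ) S :=
        Finset.mem_insert_of_mem ((cay_adj_iff S hsym).mp h).2
      have : a⁻¹ * c = (a⁻¹ * b) * (b⁻¹ * c) := by group
      rw [this]
      exact Finset.mul_mem_mul h1 ih

lemma pow_mono (T : Finset Γ) [DecidableEq Γ] (h1 : (1:Γ) ∈ T) {a b : ℕ} (hab : a ≤ b) :
    T ^ a ⊆ T ^ b := by
  induction b, hab using Nat.le_induction with
  | base => exact Finset.Subset.refl _
  | succ n hn ih =>
      refine ih.trans ?_
      intro x hx
      rw [pow_succ]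
      have := Finset.mul_mem_mul hx h1
      simpa using this

lemma dist_mem_pow (hsym : ∀ s ∈ S, s⁻¹ ∈ S) (hgen : Subgroup.closure (S : Set Γ) = ⊤)
    [DecidableEq Γ] {g h : Γ} {t : ℕ} (hd : (cayleyGraph Γ (S : Set Γ)).dist g h ≤ t) :
    g⁻¹ * h ∈ (insert (1:Γ) S) ^ t := by
  obtain ⟨w, hw⟩ := ((cay_conn S hsym hgen) g h).exists_walk_length_eq_dist
  exact pow_mono (insert 1 S) (Finset.mem_insert_self 1 S) (hw ▸ hd) (walk_mem_pow S hsym w)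

end CayAux

namespace MainAux
open PentAux CayAux

lemma cross_aux {G' : Type*} (G : SimpleGraph G') (f : G' → ℤ × ℤ) (ρ : ℕ)
    (hstep : ∀ a b : G', G.Adj a b → pentagonGraph.dist (f a) (f b) ≤ ρ) :
    ∀ {a b : G'} (w : G.Walk a b), (f a).1 < 0 → 0 < (f b).1 →
      ∃ x ∈ w.support, ∃ n : ℤ, pentagonGraph.dist (f x) ((0 : ℤ), n) ≤ ρ := by
  intro a b w
  induction w with
  | nil => intro h1 h2; omega
  | @cons a c b h w ih =>
      intro h1 h2
      rcases lt_trichotomy (f c).1 0 with hc | hc | hc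
      · obtain ⟨x, hx, hn⟩ := ih hc h2
        exact ⟨x, by simp [hx], hn⟩
      · refine ⟨c, by simp [Walk.support_cons, w.start_mem_support], (f c).2, ?_⟩
        rcases hfc : f c with ⟨c1, c2⟩
        rw [hfc] at hc
        simp only at hc
        subst hc
        simp [SimpleGraph.dist_self]
      · have hd := hstep a c h
        obtain ⟨pw, hpw⟩ := PentAux.pent_conn.exists_walk_length_eq_dist (f a) (f c)
        obtain ⟨z, hz, hz0⟩ := PentAux.pent_cross pw h1 hc
        obtain ⟨z1, z2⟩ := z
        simp only at hz0
        subst hz0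
        refine ⟨a, by simp, z2, ?_⟩
        calc pentagonGraph.dist (f a) ((0:ℤ), z2) ≤ (pw.takeUntil _ hz).length :=
              SimpleGraph.dist_le _
        _ ≤ pw.length := Walk.length_takeUntil_le pw hz
        _ = pentagonGraph.dist (f a) (f c) := hpw
        _ ≤ ρ := hd

/-- the selected pentagon points -/
def ptAux (X₀ D₀ : ℕ) (ε : ℤ) (i : ℕ × ℕ) : ℤ × ℤ :=
  (ε * (((i.1 + 1) * X₀ : ℕ) : ℤ), -((i.2 * D₀ : ℕ) : ℤ))

@[simp] lemma ptAux_fst (X₀ D₀ : ℕ) (ε : ℤ) (i : ℕ × ℕ) :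
    (ptAux X₀ D₀ ε i).1 = ε * (((i.1 + 1) * X₀ : ℕ) : ℤ) := rfl

@[simp] lemma ptAux_snd (X₀ D₀ : ℕ) (ε : ℤ) (i : ℕ × ℕ) :
    (ptAux X₀ D₀ ε i).2 = -((i.2 * D₀ : ℕ) : ℤ) := rfl

end MainAux
set_option maxHeartbeats 3000000 in
/-- Every finitely generated group quasi-isometric to the hyperbolic plane (equivalently, to
the pentagon model graph) is extraterrestrial. -/
theorem stmt_18 {Γ : Type*} [Group Γ] (S : Finset Γ)
    (hsym : ∀ s ∈ S, s⁻¹ ∈ S) (hgen : Subgroup.closure (S : Set Γ) = ⊤)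
    (f : Γ → ℤ × ℤ) (A B C : ℝ) (hA : 0 < A) (hB : 0 < B) (hC : 0 < C)
    (hqi : ∀ u v : Γ,
      (1 / A) * ((cayleyGraph Γ (S : Set Γ)).dist u v : ℝ) - B ≤
        (pentagonGraph.dist (f u) (f v) : ℝ) ∧
      (pentagonGraph.dist (f u) (f v) : ℝ) ≤
        A * ((cayleyGraph Γ (S : Set Γ)).dist u v : ℝ) + B)
    (hdense : ∀ p : ℤ × ℤ, ∃ v : Γ, (pentagonGraph.dist p (f v) : ℝ) ≤ C) :
    Extraterrestrial (cayleyGraph Γ (S : Set Γ)) := by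
  classical
  unfold Extraterrestrial
  intro m
  set Gc := cayleyGraph Γ (S : Set Γ) with hGcdef
  have hconn : Gc.Connected := CayAux.cay_conn S hsym hgen
  set A' := ⌈A⌉₊ with hA'def
  set B' := ⌈B⌉₊ with hB'def
  set C' := ⌈C⌉₊ with hC'def
  have hAle : A ≤ (A' : ℝ) := Nat.le_ceil A
  have hBle : B ≤ (B' : ℝ) := Nat.le_ceil B
  have hCle : C ≤ (C' : ℝ) := Nat.le_ceil C
  -- natural-number versions of the quasi-isometry inequalities
  have hq1 : ∀ u v : Γ, Gc.dist u v ≤ A' * pentagonGraph.dist (f u) (f v) + A' * B' := by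
    intro u v
    have h := (hqi u v).1
    have hd0 : (0:ℝ) ≤ (pentagonGraph.dist (f u) (f v) : ℝ) := Nat.cast_nonneg _
    have e : A * ((1/A) * ((Gc.dist u v : ℕ) : ℝ) - B) ≤ A * (pentagonGraph.dist (f u) (f v) : ℝ) :=
      mul_le_mul_of_nonneg_left h hA.le
    have e2 : A * ((1/A) * ((Gc.dist u v : ℕ) : ℝ) - B) = ((Gc.dist u v : ℕ) : ℝ) - A * B := by
      field_simp
    rw [e2] at e
    have h4 : A * ((pentagonGraph.dist (f u) (f v) : ℕ) : ℝ) ≤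
        (A':ℝ) * ((pentagonGraph.dist (f u) (f v) : ℕ) : ℝ) :=
      mul_le_mul_of_nonneg_right hAle hd0
    have h5 : A * B ≤ (A':ℝ) * (B':ℝ) :=
      mul_le_mul hAle hBle hB.le (le_trans hA.le hAle)
    have e3 : ((Gc.dist u v : ℕ) : ℝ) ≤
        ((A' * pentagonGraph.dist (f u) (f v) + A' * B' : ℕ) : ℝ) := by
      push_cast
      linarith
    exact_mod_cast e3
  have hq2 : ∀ u v : Γ, pentagonGraph.dist (f u) (f v) ≤ A' * Gc.dist u v + B' := by
    intro u v
    have h := (hqi u v).2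
    have h4 : A * ((Gc.dist u v : ℕ) : ℝ) ≤ (A':ℝ) * ((Gc.dist u v : ℕ) : ℝ) :=
      mul_le_mul_of_nonneg_right hAle (Nat.cast_nonneg _)
    have e3 : ((pentagonGraph.dist (f u) (f v) : ℕ) : ℝ) ≤ ((A' * Gc.dist u v + B' : ℕ) : ℝ) := by
      push_cast
      linarith
    exact_mod_cast e3
  set γ : ℤ × ℤ → Γ := fun p => (hdense p).choose with hγdef
  have hγd : ∀ p : ℤ × ℤ, pentagonGraph.dist p (f (γ p)) ≤ C' := by
    intro p
    have h := (hdense p).choose_spec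
    have h2 : ((pentagonGraph.dist p (f (γ p)) : ℕ) : ℝ) ≤ ((C' : ℕ) : ℝ) :=
      le_trans h hCle
    exact_mod_cast h2
  -- constants
  set ρ := A' + B' with hρdef
  set D₀ := 2*C' + 1 with hD₀def
  set X₀ := 2^(ρ + 2*C' + 4) with hX₀def
  set N := (S.card + 1)^(A' * B') with hNdef
  set β := 2^(2*ρ+1) + 1 with hβdef
  set M := (m+1) * β * N * (D₀ + 1) with hMdef
  have hX₀pos : 0 < X₀ := by rw [hX₀def]; positivity
  have hD₀pos : 0 < D₀ := by omega
  have hMpos : 0 < M := by rw [hMdef, hβdef, hNdef]; positivity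
  -- one step of the Cayley graph moves at most ρ in the pentagon
  have hstep : ∀ a b : Γ, Gc.Adj a b → pentagonGraph.dist (f a) (f b) ≤ ρ := by
    intro a b hab
    have h1 : Gc.dist a b ≤ 1 := by
      have := SimpleGraph.dist_le (Walk.cons hab Walk.nil)
      simpa using this
    calc pentagonGraph.dist (f a) (f b) ≤ A' * Gc.dist a b + B' := hq2 a b
    _ ≤ A' * 1 + B' := Nat.add_le_add_right (Nat.mul_le_mul_left _ h1) _
    _ = ρ := by rw [mul_one, hρdef]
  -- far-in-real-position implies far in the graph
  have hfar : ∀ p q : ℤ × ℤ, (X₀:ℝ) * (2:ℝ)^p.2 ≤ |PentAux.rp p - PentAux.rp q| →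
      ρ + 2*C' + 4 < pentagonGraph.dist p q := by
    intro p q hle
    have h1 := PentAux.rp_le_dist p q
    have hl := PentAux.two_zpow_pos p.2
    by_contra hcon
    push_neg at hcon
    have h2 : (2:ℝ)^(pentagonGraph.dist p q) ≤ (2:ℝ)^(ρ+2*C'+4) :=
      pow_le_pow_right₀ one_le_two hcon
    have hX : (X₀:ℝ) = (2:ℝ)^(ρ+2*C'+4) := by rw [hX₀def]; push_cast; ring
    nlinarith [mul_le_mul_of_nonneg_left h2 hl.le]
  -- the selected points are far from the whole axis
  have hwall : ∀ (ε : ℤ), ε = 1 ∨ ε = -1 → ∀ (i : ℕ×ℕ) (nn : ℤ),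
      ρ + 2*C' + 4 < pentagonGraph.dist (MainAux.ptAux X₀ D₀ ε i) ((0:ℤ), nn) := by
    intro ε hε i nn
    apply hfar
    have h0 : PentAux.rp ((0:ℤ), nn) = 0 := by simp [PentAux.rp]
    rw [h0, sub_zero]
    have hl := PentAux.two_zpow_pos (MainAux.ptAux X₀ D₀ ε i).2
    have habs : |(((MainAux.ptAux X₀ D₀ ε i).1 : ℤ) : ℝ)| = (((i.1+1)*X₀ : ℕ) : ℝ) := by
      rw [MainAux.ptAux_fst]
      rcases hε with h | h <;> rw [h]
      · rw [one_mul]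
        push_cast
        rw [abs_of_nonneg (by positivity)]
      · rw [neg_one_mul]
        push_cast
        rw [abs_neg, abs_of_nonneg (by positivity)]
    have hrp : |PentAux.rp (MainAux.ptAux X₀ D₀ ε i)| =
        (((i.1+1)*X₀ : ℕ) : ℝ) * (2:ℝ)^(MainAux.ptAux X₀ D₀ ε i).2 := by
      rw [PentAux.rp, abs_mul, habs, abs_of_pos hl]
    rw [hrp]
    have hc : (X₀:ℝ) ≤ (((i.1+1)*X₀ : ℕ) : ℝ) := by
      exact_mod_cast Nat.le_mul_of_pos_left X₀ (Nat.succ_pos i.1)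
    exact mul_le_mul_of_nonneg_right hc hl.le
  -- separation of the selected points
  have hsep : ∀ (ε ε' : ℤ), ε = 1 ∨ ε = -1 → ε' = 1 ∨ ε' = -1 → ∀ i i' : ℕ×ℕ,
      MainAux.ptAux X₀ D₀ ε i ≠ MainAux.ptAux X₀ D₀ ε' i' →
      2*C' + 1 ≤ pentagonGraph.dist (MainAux.ptAux X₀ D₀ ε i) (MainAux.ptAux X₀ D₀ ε' i') := by
    intro ε ε' hε hε' i i' hne
    by_cases hj : i.2 = i'.2
    · have hsnd : (MainAux.ptAux X₀ D₀ ε i).2 = (MainAux.ptAux X₀ D₀ ε' i').2 := by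
        rw [MainAux.ptAux_snd, MainAux.ptAux_snd, hj]
      have hx : (MainAux.ptAux X₀ D₀ ε i).1 ≠ (MainAux.ptAux X₀ D₀ ε' i').1 := by
        intro h
        exact hne (Prod.ext h hsnd)
      have hkey : ρ + 2*C' + 4 < pentagonGraph.dist (MainAux.ptAux X₀ D₀ ε i)
          (MainAux.ptAux X₀ D₀ ε' i') := by
        apply hfar
        have hdiff : (MainAux.ptAux X₀ D₀ ε i).1 - (MainAux.ptAux X₀ D₀ ε' i').1 =
            (ε*(i.1+1) - ε'*(i'.1+1)) * (X₀:ℤ) := by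
          rw [MainAux.ptAux_fst, MainAux.ptAux_fst]
          push_cast
          ring
        have ht : ε*((i.1:ℤ)+1) - ε'*((i'.1:ℤ)+1) ≠ 0 := by
          intro h0
          apply hx
          have : (MainAux.ptAux X₀ D₀ ε i).1 - (MainAux.ptAux X₀ D₀ ε' i').1 = 0 := by
            rw [hdiff]
            push_cast
            rw [h0, zero_mul]
          omega
        have habs : (X₀:ℤ) ≤ |(MainAux.ptAux X₀ D₀ ε i).1 - (MainAux.ptAux X₀ D₀ ε' i').1| := by
          rw [hdiff, abs_mul]
          have h1 : (1:ℤ) ≤ |ε*((i.1:ℤ)+1) - ε'*((i'.1:ℤ)+1)| := Int.one_le_abs ht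
          have h2 : |(X₀:ℤ)| = X₀ := abs_of_nonneg (by positivity)
          rw [h2]
          nlinarith [abs_nonneg ((X₀:ℤ))]
        -- convert to real positions
        have hrpe : PentAux.rp (MainAux.ptAux X₀ D₀ ε i) - PentAux.rp (MainAux.ptAux X₀ D₀ ε' i') =
            (((MainAux.ptAux X₀ D₀ ε i).1 - (MainAux.ptAux X₀ D₀ ε' i').1 : ℤ) : ℝ) *
              (2:ℝ)^(MainAux.ptAux X₀ D₀ ε i).2 := by
          rw [PentAux.rp, PentAux.rp, ← hsnd]
          push_cast
          ring
        rw [hrpe, abs_mul, abs_of_pos (PentAux.two_zpow_pos _)]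
        apply mul_le_mul_of_nonneg_right _ (PentAux.two_zpow_pos _).le
        rw [← Int.cast_abs]
        exact_mod_cast habs
      omega
    · have h1 := PentAux.level_le_dist (MainAux.ptAux X₀ D₀ ε i) (MainAux.ptAux X₀ D₀ ε' i')
      rw [MainAux.ptAux_snd, MainAux.ptAux_snd] at h1
      obtain ⟨a, ha⟩ : ∃ a, i.2 * D₀ = a := ⟨_, rfl⟩
      obtain ⟨b, hb⟩ : ∃ b, i'.2 * D₀ = b := ⟨_, rfl⟩
      rw [ha, hb] at h1
      have hab : a + D₀ ≤ b ∨ b + D₀ ≤ a := by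
        rcases Nat.lt_or_ge i.2 i'.2 with h | h
        · left
          calc a + D₀ = (i.2+1)*D₀ := by rw [← ha]; ring
          _ ≤ i'.2*D₀ := Nat.mul_le_mul_right _ h
          _ = b := hb
        · right
          have h' : i'.2 < i.2 := by omega
          calc b + D₀ = (i'.2+1)*D₀ := by rw [← hb]; ring
          _ ≤ i.2*D₀ := Nat.mul_le_mul_right _ h'
          _ = a := ha
      omega
  -- images under γ of selected points still avoid the wall
  have hwallγ : ∀ (ε : ℤ), ε = 1 ∨ ε = -1 → ∀ (i : ℕ×ℕ) (nn : ℤ),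
      ρ < pentagonGraph.dist (f (γ (MainAux.ptAux X₀ D₀ ε i))) ((0:ℤ), nn) := by
    intro ε hε i nn
    have h1 := hwall ε hε i nn
    have h2 := hγd (MainAux.ptAux X₀ D₀ ε i)
    have h3 := PentAux.pent_conn.dist_triangle
      (u := MainAux.ptAux X₀ D₀ ε i) (v := f (γ (MainAux.ptAux X₀ D₀ ε i))) (w := ((0:ℤ), nn))
    omega
  -- γ is injective on selected points
  have hγinj : ∀ (ε ε' : ℤ), ε = 1 ∨ ε = -1 → ε' = 1 ∨ ε' = -1 → ∀ i i' : ℕ×ℕ,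
      γ (MainAux.ptAux X₀ D₀ ε i) = γ (MainAux.ptAux X₀ D₀ ε' i') →
      MainAux.ptAux X₀ D₀ ε i = MainAux.ptAux X₀ D₀ ε' i' := by
    intro ε ε' hε hε' i i' heq
    by_contra hne
    have h1 := hsep ε ε' hε hε' i i' hne
    have h2 := hγd (MainAux.ptAux X₀ D₀ ε i)
    have h3 := hγd (MainAux.ptAux X₀ D₀ ε' i')
    have hc : f (γ (MainAux.ptAux X₀ D₀ ε' i')) = f (γ (MainAux.ptAux X₀ D₀ ε i)) := by
      rw [heq]
    have h5 := PentAux.pent_conn.dist_triangle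
      (u := MainAux.ptAux X₀ D₀ ε i) (v := f (γ (MainAux.ptAux X₀ D₀ ε i)))
      (w := MainAux.ptAux X₀ D₀ ε' i')
    have h6 : pentagonGraph.dist (f (γ (MainAux.ptAux X₀ D₀ ε i))) (MainAux.ptAux X₀ D₀ ε' i')
        ≤ C' := by
      rw [SimpleGraph.dist_comm, ← hc]
      exact h3
    omega
  -- signs of the images
  have hrpγ : ∀ p : ℤ × ℤ, |PentAux.rp p - PentAux.rp (f (γ p))| ≤ (2:ℝ)^p.2 * (2^C' - 1) := by
    intro p
    refine le_trans (PentAux.rp_le_dist p (f (γ p))) ?_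
    have h2 : (2:ℝ)^(pentagonGraph.dist p (f (γ p))) ≤ 2^C' :=
      pow_le_pow_right₀ one_le_two (hγd p)
    have := PentAux.two_zpow_pos p.2
    nlinarith
  have hXbig : (2:ℝ)^C' ≤ (X₀:ℝ) := by
    have hX : (X₀:ℝ) = (2:ℝ)^(ρ+2*C'+4) := by rw [hX₀def]; push_cast; ring
    rw [hX]
    exact pow_le_pow_right₀ one_le_two (by omega)
  have hcbig : ∀ i : ℕ×ℕ, (2:ℝ)^C' ≤ (((i.1+1)*X₀ : ℕ) : ℝ) := by
    intro i
    refine le_trans hXbig ?_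
    exact_mod_cast Nat.le_mul_of_pos_left X₀ (Nat.succ_pos i.1)
  have hsignU : ∀ i : ℕ×ℕ, (f (γ (MainAux.ptAux X₀ D₀ (-1) i))).1 < 0 := by
    intro i
    have h1 := hrpγ (MainAux.ptAux X₀ D₀ (-1) i)
    have hl := PentAux.two_zpow_pos (MainAux.ptAux X₀ D₀ (-1) i).2
    have hrpp : PentAux.rp (MainAux.ptAux X₀ D₀ (-1) i) =
        -((((i.1+1)*X₀ : ℕ) : ℝ)) * (2:ℝ)^(MainAux.ptAux X₀ D₀ (-1) i).2 := by
      rw [PentAux.rp, MainAux.ptAux_fst]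
      push_cast
      ring
    have h4 : PentAux.rp (f (γ (MainAux.ptAux X₀ D₀ (-1) i))) -
        PentAux.rp (MainAux.ptAux X₀ D₀ (-1) i) ≤
        |PentAux.rp (MainAux.ptAux X₀ D₀ (-1) i) -
          PentAux.rp (f (γ (MainAux.ptAux X₀ D₀ (-1) i)))| := by
      rw [abs_sub_comm]
      exact le_abs_self _
    have h3 : PentAux.rp (f (γ (MainAux.ptAux X₀ D₀ (-1) i))) < 0 := by
      nlinarith [mul_nonneg hl.le (sub_nonneg.mpr (hcbig i))]
    by_contra hge
    push_neg at hge
    have : (0:ℝ) ≤ PentAux.rp (f (γ (MainAux.ptAux X₀ D₀ (-1) i))) := by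
      rw [PentAux.rp]
      have : (0:ℝ) ≤ ((f (γ (MainAux.ptAux X₀ D₀ (-1) i))).1 : ℝ) := by exact_mod_cast hge
      exact mul_nonneg this (PentAux.two_zpow_pos _).le
    linarith
  have hsignO : ∀ i : ℕ×ℕ, 0 < (f (γ (MainAux.ptAux X₀ D₀ 1 i))).1 := by
    intro i
    have h1 := hrpγ (MainAux.ptAux X₀ D₀ 1 i)
    have hl := PentAux.two_zpow_pos (MainAux.ptAux X₀ D₀ 1 i).2
    have hrpp : PentAux.rp (MainAux.ptAux X₀ D₀ 1 i) =
        ((((i.1+1)*X₀ : ℕ) : ℝ)) * (2:ℝ)^(MainAux.ptAux X₀ D₀ 1 i).2 := by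
      rw [PentAux.rp, MainAux.ptAux_fst]
      push_cast
      ring
    have h4 : PentAux.rp (MainAux.ptAux X₀ D₀ 1 i) -
        PentAux.rp (f (γ (MainAux.ptAux X₀ D₀ 1 i))) ≤
        |PentAux.rp (MainAux.ptAux X₀ D₀ 1 i) -
          PentAux.rp (f (γ (MainAux.ptAux X₀ D₀ 1 i)))| := le_abs_self _
    have h3 : 0 < PentAux.rp (f (γ (MainAux.ptAux X₀ D₀ 1 i))) := by
      nlinarith [mul_nonneg hl.le (sub_nonneg.mpr (hcbig i))]
    by_contra hge
    push_neg at hge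
    have : PentAux.rp (f (γ (MainAux.ptAux X₀ D₀ 1 i))) ≤ 0 := by
      rw [PentAux.rp]
      have h5 : ((f (γ (MainAux.ptAux X₀ D₀ 1 i))).1 : ℝ) ≤ 0 := by exact_mod_cast hge
      exact mul_nonpos_of_nonpos_of_nonneg h5 (PentAux.two_zpow_pos _).le
    linarith
  -- provide k
  refine ⟨A' * (2*M*X₀ + 2*C') + A' * B', ?_⟩
  intro r
  set T := A'*r + B' + C' + ρ with hTdef
  set L := C' + 2*T + 2*ρ + 1 with hLdef
  set R := L*D₀ + C' + T with hRdef
  have hLpos : 0 < L := by omega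
  -- the sets
  set I : Finset (ℕ × ℕ) := Finset.range M ×ˢ Finset.range L with hIdef
  set uf : ℕ × ℕ → Γ := fun i => γ (MainAux.ptAux X₀ D₀ (-1) i) with hufdef
  set ofn : ℕ × ℕ → Γ := fun i => γ (MainAux.ptAux X₀ D₀ 1 i) with hofdef
  set U : Set Γ := uf '' ↑I with hUdef
  set O : Set Γ := ofn '' ↑I with hOdef
  set F : Set Γ := {g | ∃ n : ℤ, -(R:ℤ) ≤ n ∧ n ≤ (T:ℤ) ∧
    pentagonGraph.dist (f g) ((0:ℤ), n) ≤ ρ} with hFdef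
  have hIiff : ∀ i : ℕ×ℕ, i ∈ I ↔ i.1 < M ∧ i.2 < L := by
    intro i
    rw [hIdef, Finset.mem_product, Finset.mem_range, Finset.mem_range]
  -- injectivity
  have hufinj : ∀ i i' : ℕ×ℕ, uf i = uf i' → i = i' := by
    intro i i' h
    have h2 := hγinj (-1) (-1) (Or.inr rfl) (Or.inr rfl) i i' h
    have hf := congrArg Prod.fst h2
    have hs := congrArg Prod.snd h2
    rw [MainAux.ptAux_fst, MainAux.ptAux_fst] at hf
    rw [MainAux.ptAux_snd, MainAux.ptAux_snd] at hs
    have hf2 : (i.1+1)*X₀ = (i'.1+1)*X₀ := by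
      have : (((i.1+1)*X₀ : ℕ) : ℤ) = (((i'.1+1)*X₀ : ℕ) : ℤ) := by
        have := mul_left_cancel₀ (by norm_num : (-1:ℤ) ≠ 0) hf
        exact this
      exact_mod_cast this
    have hs2 : i.2*D₀ = i'.2*D₀ := by
      have : ((i.2*D₀ : ℕ) : ℤ) = ((i'.2*D₀ : ℕ) : ℤ) := by omega
      exact_mod_cast this
    have e1 : i.1 = i'.1 := by
      have := Nat.eq_of_mul_eq_mul_right hX₀pos hf2
      omega
    have e2 : i.2 = i'.2 := Nat.eq_of_mul_eq_mul_right hD₀pos hs2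
    exact Prod.ext e1 e2
  have hofninj : ∀ i i' : ℕ×ℕ, ofn i = ofn i' → i = i' := by
    intro i i' h
    have h2 := hγinj 1 1 (Or.inl rfl) (Or.inl rfl) i i' h
    have hf := congrArg Prod.fst h2
    have hs := congrArg Prod.snd h2
    rw [MainAux.ptAux_fst, MainAux.ptAux_fst] at hf
    rw [MainAux.ptAux_snd, MainAux.ptAux_snd] at hs
    have hf2 : (i.1+1)*X₀ = (i'.1+1)*X₀ := by
      have : (((i.1+1)*X₀ : ℕ) : ℤ) = (((i'.1+1)*X₀ : ℕ) : ℤ) := by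
        have := mul_left_cancel₀ (by norm_num : (1:ℤ) ≠ 0) hf
        exact this
      exact_mod_cast this
    have hs2 : i.2*D₀ = i'.2*D₀ := by
      have : ((i.2*D₀ : ℕ) : ℤ) = ((i'.2*D₀ : ℕ) : ℤ) := by omega
      exact_mod_cast this
    have e1 : i.1 = i'.1 := by
      have := Nat.eq_of_mul_eq_mul_right hX₀pos hf2
      omega
    have e2 : i.2 = i'.2 := Nat.eq_of_mul_eq_mul_right hD₀pos hs2
    exact Prod.ext e1 e2
  have hUO : ∀ i i' : ℕ×ℕ, uf i ≠ ofn i' := by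
    intro i i' h
    have h2 := hγinj (-1) 1 (Or.inr rfl) (Or.inl rfl) i i' h
    have hf := congrArg Prod.fst h2
    rw [MainAux.ptAux_fst, MainAux.ptAux_fst] at hf
    have hp1 : 0 < (i.1+1)*X₀ := by positivity
    have hp2 : 0 < (i'.1+1)*X₀ := by positivity
    obtain ⟨a, ha⟩ : ∃ a, (i.1+1)*X₀ = a := ⟨_, rfl⟩
    obtain ⟨b, hb⟩ : ∃ b, (i'.1+1)*X₀ = b := ⟨_, rfl⟩
    rw [ha, hb] at hf
    rw [ha] at hp1
    rw [hb] at hp2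
    omega
  -- the injection bounding the size of F
  set SlabF : Finset (ℤ × ℤ) :=
    (Finset.Icc (-(2^(2*ρ) : ℤ)) (2^(2*ρ))) ×ˢ (Finset.Icc (-(R:ℤ) - ρ) ((T:ℤ) + ρ)) with hSlabFdef
  set ballF : Finset Γ := (insert (1:Γ) S)^(A'*B') with hballFdef
  set rep : ℤ × ℤ → Γ := fun q => if h : ∃ g, f g = q then h.choose else 1 with hrepdef
  set Ψ : Γ → (ℤ × ℤ) × Γ := fun g => (f g, (rep (f g))⁻¹ * g) with hΨdef
  have hrep : ∀ g : Γ, f (rep (f g)) = f g := by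
    intro g
    have hex : ∃ g', f g' = f g := ⟨g, rfl⟩
    rw [hrepdef]
    simp only
    rw [dif_pos hex]
    exact hex.choose_spec
  have hfib : ∀ g : Γ, (rep (f g))⁻¹ * g ∈ ballF := by
    intro g
    have h2 := hq1 (rep (f g)) g
    rw [hrep g, SimpleGraph.dist_self] at h2
    rw [mul_zero, zero_add] at h2
    exact CayAux.dist_mem_pow S hsym hgen h2
  have hmapsto : ∀ g ∈ F, Ψ g ∈ (↑(SlabF ×ˢ ballF) : Set ((ℤ × ℤ) × Γ)) := by
    intro g hg
    obtain ⟨n, hn1, hn2, hn3⟩ := hg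
    rw [Finset.mem_coe, Finset.mem_product]
    simp only [hΨdef]
    constructor
    · -- f g ∈ SlabF
      have hl := PentAux.level_le_dist (f g) ((0:ℤ), n)
      have hl2 : ((f g).2 - n).natAbs ≤ ρ := le_trans hl hn3
      rw [hSlabFdef, Finset.mem_product]
      constructor
      · -- first coordinate bounded
        have h1 := PentAux.rp_le_dist ((0:ℤ), n) (f g)
        rw [SimpleGraph.dist_comm (u := ((0:ℤ),n)) (v := f g)] at h1
        have h0 : PentAux.rp ((0:ℤ), n) = 0 := by simp [PentAux.rp]
        rw [h0] at h1
        have hdd : (2:ℝ)^(pentagonGraph.dist (f g) ((0:ℤ), n)) ≤ 2^ρ :=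
          pow_le_pow_right₀ one_le_two hn3
        have h1' : |PentAux.rp (f g)| ≤ (2:ℝ)^((0:ℤ),n).2 * (2^ρ - 1) := by
          rw [abs_sub_comm] at h1
          rw [sub_zero] at h1
          have hz := PentAux.two_zpow_pos (((0:ℤ),n)).2
          nlinarith
        have e2 : (2:ℝ)^(((0:ℤ),n)).2 ≤ (2:ℝ)^((f g).2) * (2:ℝ)^(ρ:ℕ) := by
          have : (2:ℝ)^(n : ℤ) ≤ (2:ℝ)^((f g).2 + (ρ:ℕ)) :=
            zpow_le_zpow_right₀ one_le_two (by omega)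
          rw [zpow_add₀ (by norm_num : (2:ℝ) ≠ 0), zpow_natCast] at this
          exact this
        have e3 : |PentAux.rp (f g)| = |((f g).1:ℝ)| * (2:ℝ)^((f g).2) := by
          rw [PentAux.rp, abs_mul, abs_of_pos (PentAux.two_zpow_pos _)]
        have hz2 := PentAux.two_zpow_pos ((f g).2)
        have hz3 : (1:ℝ) ≤ (2:ℝ)^(ρ:ℕ) := one_le_pow₀ (by norm_num)
        have key : |((f g).1 : ℝ)| ≤ (2:ℝ)^(2*ρ) := by
          have h2ρ : (2:ℝ)^(2*ρ) = (2:ℝ)^(ρ:ℕ) * (2:ℝ)^(ρ:ℕ) := by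
            rw [two_mul, pow_add]
          rw [h2ρ]
          nlinarith [abs_nonneg (((f g).1 : ℝ)), mul_le_mul_of_nonneg_right e2
            (by nlinarith : (0:ℝ) ≤ (2:ℝ)^(ρ:ℕ) - 1)]
        have key2 : |(f g).1| ≤ ((2:ℤ)^(2*ρ)) := by
          have hcast : ((|(f g).1| : ℤ) : ℝ) ≤ (((2:ℤ)^(2*ρ) : ℤ) : ℝ) := by
            rw [Int.cast_abs]
            push_cast
            exact key
          exact_mod_cast hcast
        rw [Finset.mem_Icc]
        have := abs_le.mp key2
        exact ⟨this.1, this.2⟩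
      · rw [Finset.mem_Icc]
        constructor
        · omega
        · omega
    · exact hfib g
  have hΨinj : Set.InjOn Ψ F := by
    intro g hg g' hg' h
    have h1 : f g = f g' := congrArg Prod.fst h
    have h2 := congrArg Prod.snd h
    simp only [hΨdef] at h2
    rw [h1] at h2
    exact mul_left_cancel h2
  have hFsub : Ψ '' F ⊆ (↑(SlabF ×ˢ ballF) : Set ((ℤ × ℤ) × Γ)) := by
    rintro _ ⟨g, hg, rfl⟩
    exact hmapsto g hg
  have hFfin : F.Finite :=
    Set.Finite.of_finite_image (Set.Finite.subset (SlabF ×ˢ ballF).finite_toSet hFsub) hΨinj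
  have hFcard : F.ncard ≤ β * (R + T + 2*ρ + 1) * N := by
    have h1 : F.ncard ≤ ((SlabF ×ˢ ballF : Finset ((ℤ × ℤ) × Γ)) : Set ((ℤ × ℤ) × Γ)).ncard :=
      Set.ncard_le_ncard_of_injOn Ψ hmapsto hΨinj (Finset.finite_toSet _)
    rw [Set.ncard_coe_finset, Finset.card_product] at h1
    have hslab : SlabF.card ≤ β * (R + T + 2*ρ + 1) := by
      rw [hSlabFdef, Finset.card_product, Int.card_Icc, Int.card_Icc]
      have hcast : ((2:ℤ))^(2*ρ) = ((2^(2*ρ) : ℕ) : ℤ) := by push_cast; ring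
      obtain ⟨w, hw0⟩ : ∃ w : ℕ, 2^(2*ρ) = w := ⟨_, rfl⟩
      have hβw : β = 2*w + 1 := by
        rw [hβdef, ← hw0, pow_succ]
        ring
      rw [hcast, hw0, hβw]
      have e1 : (((w:ℤ)) + 1 - -(w:ℤ)).toNat = 2*w + 1 := by omega
      have e2 : (((T:ℤ)) + (ρ:ℤ) + 1 - (-(R:ℤ) - (ρ:ℤ))).toNat = R + T + 2*ρ + 1 := by omega
      rw [e1, e2]
    have hball : ballF.card ≤ N := by
      rw [hballFdef, hNdef]
      calc ((insert (1:Γ) S)^(A'*B')).card ≤ (insert (1:Γ) S).card^(A'*B') :=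
        Finset.card_pow_le
      _ ≤ (S.card+1)^(A'*B') := Nat.pow_le_pow_left (Finset.card_insert_le _ _) _
    calc F.ncard ≤ SlabF.card * ballF.card := h1
    _ ≤ (β * (R + T + 2*ρ + 1)) * N := Nat.mul_le_mul hslab hball
  have hUcard : U.ncard = M * L := by
    rw [hUdef, Set.ncard_image_of_injOn (fun a _ b _ h => hufinj a b h),
      Set.ncard_coe_finset, hIdef, Finset.card_product, Finset.card_range, Finset.card_range]
  have hcards : m * F.ncard ≤ U.ncard := by
    obtain ⟨ld, hld⟩ : ∃ x, L*D₀ = x := ⟨_, rfl⟩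
    have h2 : R + T + 2*ρ + 1 ≤ L * (D₀+1) := by
      have e1 : L * (D₀+1) = ld + L := by rw [← hld]; ring
      rw [e1]
      omega
    calc m * F.ncard ≤ (m+1) * (β * (R + T + 2*ρ + 1) * N) :=
      Nat.mul_le_mul (by omega) hFcard
    _ ≤ (m+1) * (β * (L * (D₀+1)) * N) := by
      refine Nat.mul_le_mul_left _ (Nat.mul_le_mul_right _ (Nat.mul_le_mul_left _ h2))
    _ = M * L := by rw [hMdef]; ring
    _ = U.ncard := hUcard.symm
  -- distances between matched points
  have hmatch : ∀ i : ℕ×ℕ, i.1 < M →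
      Gc.dist (uf i) (ofn i) ≤ A' * (2*M*X₀ + 2*C') + A' * B' := by
    intro i hi
    have hpt : pentagonGraph.dist (MainAux.ptAux X₀ D₀ (-1) i) (MainAux.ptAux X₀ D₀ 1 i)
        ≤ 2*M*X₀ := by
      have hh := (PentAux.dist_horiz ((-1) * (((i.1+1)*X₀ : ℕ) : ℤ))
        ((1:ℤ) * (((i.1+1)*X₀ : ℕ) : ℤ)) (-((i.2*D₀ : ℕ) : ℤ))).1
      have he1 : MainAux.ptAux X₀ D₀ (-1) i =
          ((-1) * (((i.1+1)*X₀ : ℕ) : ℤ), -((i.2*D₀ : ℕ) : ℤ)) := rfl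
      have he2 : MainAux.ptAux X₀ D₀ 1 i =
          ((1:ℤ) * (((i.1+1)*X₀ : ℕ) : ℤ), -((i.2*D₀ : ℕ) : ℤ)) := rfl
      rw [he1, he2]
      refine le_trans hh ?_
      obtain ⟨c, hc⟩ : ∃ c, (i.1+1)*X₀ = c := ⟨_, rfl⟩
      have hcM : c ≤ M*X₀ := by
        rw [← hc]
        exact Nat.mul_le_mul_right _ (by omega)
      rw [hc, mul_assoc]
      obtain ⟨mx, hmx⟩ : ∃ x, M*X₀ = x := ⟨_, rfl⟩
      rw [hmx]
      rw [hmx] at hcM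
      omega
    have t1 := PentAux.pent_conn.dist_triangle (u := f (uf i))
      (v := MainAux.ptAux X₀ D₀ (-1) i) (w := f (ofn i))
    have t2 := PentAux.pent_conn.dist_triangle (u := MainAux.ptAux X₀ D₀ (-1) i)
      (v := MainAux.ptAux X₀ D₀ 1 i) (w := f (ofn i))
    have t3 : pentagonGraph.dist (f (uf i)) (MainAux.ptAux X₀ D₀ (-1) i) ≤ C' := by
      rw [SimpleGraph.dist_comm]
      exact hγd _
    have t4 : pentagonGraph.dist (MainAux.ptAux X₀ D₀ 1 i) (f (ofn i)) ≤ C' := hγd _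
    have htri : pentagonGraph.dist (f (uf i)) (f (ofn i)) ≤ 2*M*X₀ + 2*C' := by omega
    calc Gc.dist (uf i) (ofn i)
        ≤ A' * pentagonGraph.dist (f (uf i)) (f (ofn i)) + A' * B' := hq1 _ _
    _ ≤ A' * (2*M*X₀ + 2*C') + A' * B' := Nat.add_le_add_right (Nat.mul_le_mul_left _ htri) _
  -- assemble the UFO
  refine ⟨U, F, O, ?_⟩
  unfold IsUFO
  set φ : Γ → Γ := fun g => ofn (Function.invFunOn uf ↑I g) with hφdef
  have hφval : ∀ i, i ∈ I → φ (uf i) = ofn i := by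
    intro i hi
    have hex : ∃ a ∈ (↑I : Set (ℕ×ℕ)), uf a = uf i := ⟨i, Finset.mem_coe.mpr hi, rfl⟩
    have h1 := Function.invFunOn_eq hex
    have h2 := hufinj _ _ h1
    rw [hφdef]
    simp only
    rw [h2]
  refine ⟨?_, ?_, hFfin, ?_, ?_, ?_, ?_, hcards, ⟨φ, ⟨?_, ?_, ?_⟩, ?_⟩, ?_⟩
  · exact ⟨uf (0,0), ⟨(0,0), Finset.mem_coe.mpr ((hIiff _).mpr ⟨hMpos, hLpos⟩), rfl⟩⟩
  · exact I.finite_toSet.image uf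
  · exact I.finite_toSet.image ofn
  · -- Disjoint U F
    rw [Set.disjoint_left]
    rintro g ⟨i, hi, rfl⟩ hgF
    obtain ⟨n, hn1, hn2, hn3⟩ := hgF
    exact absurd hn3 (not_le.mpr (hwallγ (-1) (Or.inr rfl) i n))
  · -- Disjoint U O
    rw [Set.disjoint_left]
    rintro g ⟨i, hi, rfl⟩ ⟨i', hi', he⟩
    exact hUO i i' he.symm
  · -- Disjoint F O
    rw [Set.disjoint_left]
    rintro g hgF ⟨i, hi, rfl⟩
    obtain ⟨n, hn1, hn2, hn3⟩ := hgF
    exact absurd hn3 (not_le.mpr (hwallγ 1 (Or.inl rfl) i n))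
  · -- MapsTo
    rintro g ⟨i, hi, rfl⟩
    rw [hφval i (Finset.mem_coe.mp hi)]
    exact ⟨i, hi, rfl⟩
  · -- InjOn
    rintro g ⟨i, hi, rfl⟩ g' ⟨i', hi', rfl⟩ he
    rw [hφval i (Finset.mem_coe.mp hi), hφval i' (Finset.mem_coe.mp hi')] at he
    rw [hofninj i i' he]
  · -- SurjOn
    rintro g ⟨i, hi, rfl⟩
    exact ⟨uf i, ⟨i, hi, rfl⟩, hφval i (Finset.mem_coe.mp hi)⟩
  · -- matching distance
    rintro u ⟨i, hi, rfl⟩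
    rw [hφval i (Finset.mem_coe.mp hi)]
    exact ⟨hconn _ _, hmatch i ((hIiff i).mp (Finset.mem_coe.mp hi)).1⟩
  · -- the separation condition
    rintro u ⟨i, hi, rfl⟩ o ⟨i', hi', rfl⟩ p hp
    obtain ⟨x, hxsup, n, hxn⟩ := MainAux.cross_aux Gc f ρ hstep p (hsignU i) (hsignO i')
    have hxF : x ∉ F := hp x hxsup
    have hnIcc : ¬(-(R:ℤ) ≤ n ∧ n ≤ (T:ℤ)) := fun hcc => hxF ⟨n, hcc.1, hcc.2, hxn⟩
    have hlev1 : ((MainAux.ptAux X₀ D₀ (-1) i).2 - (f (uf i)).2).natAbs ≤ C' :=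
      le_trans (PentAux.level_le_dist _ _) (hγd _)
    rw [MainAux.ptAux_snd] at hlev1
    have hlev2 := PentAux.level_le_dist (f (uf i)) ((0:ℤ), n)
    have htri : pentagonGraph.dist (f (uf i)) ((0:ℤ), n) ≤
        pentagonGraph.dist (f (uf i)) (f x) + ρ := by
      have := PentAux.pent_conn.dist_triangle (u := f (uf i)) (v := f x) (w := ((0:ℤ), n))
      omega
    have hq2x := hq2 (uf i) x
    have hjL : i.2 < L := ((hIiff i).mp (Finset.mem_coe.mp hi)).2
    obtain ⟨jd, hjd⟩ : ∃ a, i.2 * D₀ = a := ⟨_, rfl⟩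
    obtain ⟨ld, hld⟩ : ∃ a, L * D₀ = a := ⟨_, rfl⟩
    obtain ⟨ar, har⟩ : ∃ a, A' * r = a := ⟨_, rfl⟩
    obtain ⟨ad, had⟩ : ∃ a, A' * Gc.dist (uf i) x = a := ⟨_, rfl⟩
    have hjdld : jd + D₀ ≤ ld := by
      rw [← hjd, ← hld]
      calc i.2*D₀ + D₀ = (i.2+1)*D₀ := by ring
      _ ≤ L*D₀ := Nat.mul_le_mul_right _ hjL
    rw [hjd] at hlev1
    rw [had] at hq2x
    have hT2 : T = ar + B' + C' + ρ := by rw [hTdef, har]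
    have hR2 : R = ld + C' + T := by rw [hRdef, hld]
    have hkey : ar + 1 ≤ ad := by omega
    have hrd : r < Gc.dist (uf i) x := by
      by_contra hcon
      push_neg at hcon
      have hmul := Nat.mul_le_mul_left A' hcon
      rw [had, har] at hmul
      omega
    calc r ≤ Gc.dist (uf i) x := hrd.le
    _ ≤ (p.takeUntil x hxsup).length := SimpleGraph.dist_le _
    _ ≤ p.length := Walk.length_takeUntil_le p hxsup
end

section
/- Let Γ be a group and C ≤ Γ a subgroup, and consider the Z₂-vector space E(C\Γ) of subsets of the coset space C\Γ modulo finite symmetric differences, with Γ acting on the right. Then the dimension over Z₂ of the space of Γ-invariant elements of E(C\Γ) equals the number of ends of the Schreier graph Sch(Γ,C,S) for any finite symmetric generating set S of Γ. -/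
/-- Right translation on the space of right cosets `C\Γ`. -/
def cosetRmul {Γ : Type*} [Group Γ] (C : Subgroup Γ) (g : Γ) :
    Quotient (QuotientGroup.rightRel C) → Quotient (QuotientGroup.rightRel C) :=
  Quotient.map' (· * g) (fun a b hab => by
    have h : b * a⁻¹ ∈ C := QuotientGroup.rightRel_apply.mp hab
    exact QuotientGroup.rightRel_apply.mpr (by simpa [mul_assoc, mul_inv_rev] using h))

/-- The `ZMod 2`-submodule of finitely supported functions `X → ZMod 2`; identifying subsets of
`X` with their indicator functions, this is the subspace of finite subsets of `X`. -/
def finSupportSubmodule (X : Type*) : Submodule (ZMod 2) (X → ZMod 2) where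
  carrier := {f | (Function.support f).Finite}
  zero_mem' := by simp
  add_mem' := by
    intro a b ha hb
    exact (ha.union hb).subset (Function.support_add a b)
  smul_mem' := by
    intro c f hf
    refine hf.subset ?_
    intro x hx
    simp only [Function.mem_support, Pi.smul_apply, smul_eq_mul] at hx ⊢
    intro h0
    exact hx (by rw [h0, mul_zero])

/-- The `ZMod 2`-submodule of functions on the coset space `C\Γ` (identified with subsets of
`C\Γ`) whose every right translate differs from them on only finitely many points. -/
def invariantModFinite {Γ : Type*} [Group Γ] (C : Subgroup Γ) :
    Submodule (ZMod 2) (Quotient (QuotientGroup.rightRel C) → ZMod 2) where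
  carrier := {f | ∀ g : Γ, (Function.support fun x => f (cosetRmul C g x) - f x).Finite}
  zero_mem' := by intro g; simp
  add_mem' := by
    intro a b ha hb g
    refine ((ha g).union (hb g)).subset ?_
    intro x hx
    simp only [Function.mem_support, Set.mem_union] at hx ⊢
    by_contra hcon
    push_neg at hcon
    apply hx
    simp only [Pi.add_apply]
    rw [show (a (cosetRmul C g x) + b (cosetRmul C g x)) - (a x + b x)
        = (a (cosetRmul C g x) - a x) + (b (cosetRmul C g x) - b x) by ring,
      hcon.1, hcon.2, add_zero]
  smul_mem' := by
    intro c f hf g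
    refine (hf g).subset ?_
    intro x hx
    simp only [Function.mem_support, Pi.smul_apply, smul_eq_mul] at hx ⊢
    intro h0
    apply hx
    rw [show c * f (cosetRmul C g x) - c * f x = c * (f (cosetRmul C g x) - f x) by ring,
      h0, mul_zero]


section
variable {Γ : Type*} [Group Γ] (C : Subgroup Γ) {S : Finset Γ}

private abbrev VV : Type _ := Quotient (QuotientGroup.rightRel C)

lemma cosetRmul_mk (g a : Γ) :
    cosetRmul C g (Quotient.mk _ a) = Quotient.mk _ (a * g) := rfl

lemma cosetRmul_mul (g h : Γ) (x : VV C) :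
    cosetRmul C (g * h) x = cosetRmul C h (cosetRmul C g x) := by
  induction x using Quotient.ind
  simp [cosetRmul, Quotient.map'_mk'', mul_assoc]

lemma cosetRmul_one (x : VV C) : cosetRmul C 1 x = x := by
  induction x using Quotient.ind
  simp [cosetRmul, Quotient.map'_mk'']


lemma adj_of_ne {s : Γ} (hs : s ∈ S) {x : VV C} (h : cosetRmul C s x ≠ x) :
    (schreierGraph C (S : Set Γ)).Adj x (cosetRmul C s x) := by
  induction x using Quotient.ind with
  | _ a => exact ⟨h.symm, s, by exact_mod_cast hs, a, Or.inl ⟨rfl, rfl⟩⟩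

lemma exists_of_adj (hsym : ∀ s ∈ S, s⁻¹ ∈ S) {x y : VV C}
    (h : (schreierGraph C (S : Set Γ)).Adj x y) : ∃ s ∈ S, y = cosetRmul C s x := by
  obtain ⟨-, s, hs, g, hcase⟩ := h
  rw [Finset.mem_coe] at hs
  rcases hcase with ⟨hx, hy⟩ | ⟨hy, hx⟩
  · exact ⟨s, hs, by rw [hx, hy, cosetRmul_mk]⟩
  · refine ⟨s⁻¹, hsym s hs, ?_⟩
    rw [hx, hy, cosetRmul_mk, mul_assoc, mul_inv_cancel, mul_one]

lemma exists_list_S (hsym : ∀ s ∈ S, s⁻¹ ∈ S) (hgen : Subgroup.closure (S : Set Γ) = ⊤)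
    (x : Γ) : ∃ l : List Γ, (∀ y ∈ l, y ∈ S) ∧ l.prod = x := by
  have hx : x ∈ Subgroup.closure (S : Set Γ) := hgen ▸ Subgroup.mem_top x
  have hx' : x ∈ (Subgroup.closure (S : Set Γ)).toSubmonoid := hx
  rw [Subgroup.closure_toSubmonoid] at hx'
  have hU : (S : Set Γ) ∪ (S : Set Γ)⁻¹ = (S : Set Γ) := by
    apply Set.union_eq_self_of_subset_right
    intro s hs
    rw [Set.mem_inv] at hs
    simpa using hsym s⁻¹ hs
  rw [hU] at hx'
  obtain ⟨l, h1, h2⟩ := Submonoid.exists_list_of_mem_closure hx'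
  exact ⟨l, fun y hy => by exact_mod_cast h1 y hy, h2⟩

lemma countable_of_gen (hsym : ∀ s ∈ S, s⁻¹ ∈ S) (hgen : Subgroup.closure (S : Set Γ) = ⊤) :
    Countable Γ := by
  have : Function.Surjective (fun l : List {x : Γ // x ∈ S} => (l.map Subtype.val).prod) := by
    intro x
    obtain ⟨l, h1, h2⟩ := exists_list_S hsym hgen x
    refine ⟨l.attach.map (fun y => ⟨y.1, h1 y.1 y.2⟩), ?_⟩
    simp only [List.map_map]
    simpa using h2
  exact this.countable

lemma reachable_cosetRmul (hsym : ∀ s ∈ S, s⁻¹ ∈ S)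
    (hgen : Subgroup.closure (S : Set Γ) = ⊤) (x : VV C) (g : Γ) :
    (schreierGraph C (S : Set Γ)).Reachable x (cosetRmul C g x) := by
  obtain ⟨l, h1, h2⟩ := exists_list_S hsym hgen g
  subst h2
  clear hgen
  induction l generalizing x with
  | nil => rw [List.prod_nil, cosetRmul_one]
  | cons s t ih =>
      rw [List.prod_cons, cosetRmul_mul]
      refine SimpleGraph.Reachable.trans ?_ (ih (cosetRmul C s x) (fun y hy => h1 y (List.mem_cons_of_mem s hy)))
      by_cases h : cosetRmul C s x = x
      · rw [h]
      · exact (adj_of_ne C (h1 s (List.mem_cons_self)) h).reachable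

lemma preconnected_schreier (hsym : ∀ s ∈ S, s⁻¹ ∈ S)
    (hgen : Subgroup.closure (S : Set Γ) = ⊤) :
    (schreierGraph C (S : Set Γ)).Preconnected := by
  intro x y
  induction x using Quotient.ind with
  | _ a =>
    induction y using Quotient.ind with
    | _ b =>
      have := reachable_cosetRmul C hsym hgen (Quotient.mk _ a) (a⁻¹ * b)
      rwa [cosetRmul_mk, mul_inv_cancel_left] at this


lemma exists_first_exit {V' : Type*} {G' : SimpleGraph V'} {D : Set V'} {v d : V'}
    (w : G'.Walk v d) :  ∀ (hv : v ∈ Dᶜ), d ∈ D →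
    ∃ (a : ↥Dᶜ) (b : V'), (G'.induce Dᶜ).Reachable ⟨v, hv⟩ a ∧ G'.Adj ↑a b ∧ b ∈ D := by
  induction w with
  | nil => exact fun hv hd => absurd hd hv
  | @cons u x e hadj p ih =>
      intro hv hd
      by_cases hx : x ∈ D
      · exact ⟨⟨u, hv⟩, x, SimpleGraph.Reachable.refl _, hadj, hx⟩
      · obtain ⟨a, b, hr, hab, hbD⟩ := ih hx hd
        refine ⟨a, b, SimpleGraph.Reachable.trans ?_ hr, hab, hbD⟩
        have h2 : (G'.induce Dᶜ).Adj ⟨u, hv⟩ ⟨x, hx⟩ := hadj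
        exact h2.reachable

lemma reachable_induce_of_walk {V' : Type*} {G' : SimpleGraph V'} {D : Set V'} {v d : V'}
    (w : G'.Walk v d) (h : ∀ x, x ∈ Dᶜ) :
    (G'.induce Dᶜ).Reachable ⟨v, h v⟩ ⟨d, h d⟩ := by
  induction w with
  | nil => exact SimpleGraph.Reachable.refl _
  | @cons u x e hadj p ih =>
      have h2 : (G'.induce Dᶜ).Adj ⟨u, h u⟩ ⟨x, h x⟩ := hadj
      exact SimpleGraph.Reachable.trans h2.reachable ih

lemma components_finite (hsym : ∀ s ∈ S, s⁻¹ ∈ S) (hgen : Subgroup.closure (S : Set Γ) = ⊤)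
    (D : Finset (VV C)) :
    Finite ((schreierGraph C (S : Set Γ)).induce ((↑D : Set (VV C))ᶜ)).ConnectedComponent := by
  rcases D.eq_empty_or_nonempty with hD | ⟨d₀, hd₀⟩
  · subst hD
    have hall : ∀ x : VV C, x ∈ ((↑(∅ : Finset (VV C)) : Set (VV C))ᶜ) := by simp
    have : Subsingleton
        ((schreierGraph C (S : Set Γ)).induce ((↑(∅ : Finset (VV C)) : Set (VV C))ᶜ)).ConnectedComponent := by
      constructor
      intro c c'
      induction c using SimpleGraph.ConnectedComponent.ind with
      | _ a =>
        induction c' using SimpleGraph.ConnectedComponent.ind with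
        | _ b =>
          apply SimpleGraph.ConnectedComponent.sound
          obtain ⟨w⟩ := preconnected_schreier C hsym hgen ↑a ↑b
          have := reachable_induce_of_walk w hall
          convert this <;> simp
    exact Finite.of_subsingleton
  · -- nonempty case: inject components into the finite neighborhood set
    set N : Set (VV C) := ⋃ b ∈ (↑D : Set (VV C)), ⋃ s ∈ (↑S : Set Γ), {cosetRmul C s b} with hN
    have hNfin : N.Finite := by
      apply Set.Finite.biUnion D.finite_toSet
      intro b _
      apply Set.Finite.biUnion S.finite_toSet
      intro s _
      exact Set.finite_singleton _
    have key : ∀ c : ((schreierGraph C (S : Set Γ)).induce ((↑D : Set (VV C))ᶜ)).ConnectedComponent,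
        ∃ a : ↥((↑D : Set (VV C))ᶜ), SimpleGraph.connectedComponentMk _ a = c ∧ ↑a ∈ N := by
      intro c
      induction c using SimpleGraph.ConnectedComponent.ind with
      | _ v =>
        obtain ⟨w⟩ := preconnected_schreier C hsym hgen ↑v ↑d₀
        obtain ⟨a, b, hr, hab, hbD⟩ := exists_first_exit w v.2 hd₀
        refine ⟨a, ?_, ?_⟩
        · exact (SimpleGraph.ConnectedComponent.sound hr).symm
        · obtain ⟨s, hs, hsa⟩ := exists_of_adj C hsym hab.symm
          exact Set.mem_biUnion hbD (Set.mem_biUnion (by exact_mod_cast hs) (by simp [hsa]))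
    choose rep hrep hrepN using key
    haveI := hNfin.to_subtype
    have hinj : Function.Injective (fun c => (⟨↑(rep c), hrepN c⟩ : ↥N)) := by
      intro c c' h
      simp only [Subtype.mk.injEq, Subtype.val_inj] at h
      rw [← hrep c, ← hrep c', h]
    exact Finite.of_injective _ hinj

/-- Right translation as an equivalence. -/
def cosetRmulEquiv (g : Γ) : VV C ≃ VV C where
  toFun := cosetRmul C g
  invFun := cosetRmul C g⁻¹
  left_inv x := by rw [← cosetRmul_mul, mul_inv_cancel, cosetRmul_one]
  right_inv x := by rw [← cosetRmul_mul, inv_mul_cancel, cosetRmul_one]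

lemma mem_invariant_of_gen (hsym : ∀ s ∈ S, s⁻¹ ∈ S) (hgen : Subgroup.closure (S : Set Γ) = ⊤)
    (f : VV C → ZMod 2)
    (h : ∀ s ∈ S, (Function.support fun x => f (cosetRmul C s x) - f x).Finite) :
    f ∈ invariantModFinite C := by
  intro g
  obtain ⟨l, h1, h2⟩ := exists_list_S hsym hgen g
  subst h2
  induction l with
  | nil =>
      have : (Function.support fun x => f (cosetRmul C ([] : List Γ).prod x) - f x) = ∅ := by
        ext x
        simp [cosetRmul_one]
      rw [this]
      exact Set.finite_empty
  | cons s t ih =>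
      have hs : s ∈ S := h1 s (List.mem_cons_self)
      have ht := ih (fun y hy => h1 y (List.mem_cons_of_mem s hy))
      have hsub : (Function.support fun x => f (cosetRmul C (s :: t).prod x) - f x) ⊆
          (cosetRmul C s) ⁻¹' (Function.support fun x => f (cosetRmul C t.prod x) - f x) ∪
          (Function.support fun x => f (cosetRmul C s x) - f x) := by
        intro x hx
        simp only [Function.mem_support, List.prod_cons, Set.mem_union, Set.mem_preimage] at hx ⊢
        by_contra hcon
        push_neg at hcon
        apply hx
        rw [cosetRmul_mul]
        have e1 := hcon.1
        have e2 := hcon.2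
        rw [show f (cosetRmul C t.prod (cosetRmul C s x)) - f x
            = (f (cosetRmul C t.prod (cosetRmul C s x)) - f (cosetRmul C s x))
              + (f (cosetRmul C s x) - f x) by ring, e1, e2, add_zero]
      refine (Set.Finite.union ?_ (h s hs)).subset hsub
      exact ht.preimage ((cosetRmulEquiv C s).injective.injOn)

/-- The union of the supports of the `s`-differences, `s` in `S` : the "boundary" of `f`. -/
def Bset (f : VV C → ZMod 2) : Set (VV C) :=
  ⋃ s ∈ (S : Set Γ), Function.support fun x => f (cosetRmul C s x) - f x

lemma Bset_finite {f : VV C → ZMod 2} (hf : f ∈ invariantModFinite C) :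
    (Bset C (S := S) f).Finite :=
  Set.Finite.biUnion S.finite_toSet fun s _ => hf s

lemma diff_zero_of_not_mem_Bset {f : VV C → ZMod 2} {x : VV C} (hx : x ∉ Bset C (S := S) f)
    {s : Γ} (hs : s ∈ S) : f (cosetRmul C s x) = f x := by
  have : x ∉ Function.support fun x => f (cosetRmul C s x) - f x := fun h =>
    hx (Set.mem_biUnion (by exact_mod_cast hs) h)
  simpa [sub_eq_zero, Function.mem_support, not_not] using this

lemma constant_on_component {f : VV C → ZMod 2} (hsym : ∀ s ∈ S, s⁻¹ ∈ S) {D : Finset (VV C)}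
    (hB : Bset C (S := S) f ⊆ ↑D) (a b : ↥((↑D : Set (VV C))ᶜ))
    (hab : ((schreierGraph C (S : Set Γ)).induce ((↑D : Set (VV C))ᶜ)).Reachable a b) :
    f ↑a = f ↑b := by
  obtain ⟨w⟩ := hab
  induction w with
  | nil => rfl
  | @cons u x e hadj p ih =>
      refine Eq.trans ?_ ih
      have hGadj : (schreierGraph C (S : Set Γ)).Adj ↑u ↑x := hadj
      obtain ⟨s, hs, hx⟩ := exists_of_adj C hsym hGadj
      have hu : (↑u : VV C) ∉ Bset C (S := S) f := fun h => u.2 (hB h)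
      rw [hx]
      exact (diff_zero_of_not_mem_Bset C hu hs).symm



/-- Lift of the support of a connected component of the induced graph to the vertex set. -/
def csupp (D : Finset (VV C))
    (c : ((schreierGraph C (S : Set Γ)).induce ((↑D : Set (VV C))ᶜ)).ConnectedComponent) :
    Set (VV C) :=
  Subtype.val '' c.supp

lemma mem_csupp {D : Finset (VV C)}
    {c : ((schreierGraph C (S : Set Γ)).induce ((↑D : Set (VV C))ᶜ)).ConnectedComponent}
    {x : VV C} :
    x ∈ csupp C D c ↔ ∃ hx : x ∈ ((↑D : Set (VV C))ᶜ),
      SimpleGraph.connectedComponentMk _ ⟨x, hx⟩ = c := by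
  constructor
  · rintro ⟨⟨y, hy⟩, hysupp, rfl⟩
    exact ⟨hy, (SimpleGraph.ConnectedComponent.mem_supp_iff _ _).mp hysupp⟩
  · rintro ⟨hx, hc⟩
    exact ⟨⟨x, hx⟩, (SimpleGraph.ConnectedComponent.mem_supp_iff _ _).mpr hc, rfl⟩

lemma indic_eq_of_adj {D : Finset (VV C)}
    {c : ((schreierGraph C (S : Set Γ)).induce ((↑D : Set (VV C))ᶜ)).ConnectedComponent}
    {x y : VV C} (hx : x ∈ ((↑D : Set (VV C))ᶜ)) (hy : y ∈ ((↑D : Set (VV C))ᶜ))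
    (hadj : ((schreierGraph C (S : Set Γ)).induce ((↑D : Set (VV C))ᶜ)).connectedComponentMk ⟨x, hx⟩ =
      ((schreierGraph C (S : Set Γ)).induce ((↑D : Set (VV C))ᶜ)).connectedComponentMk ⟨y, hy⟩) :
    (csupp C D c).indicator (1 : VV C → ZMod 2) x = (csupp C D c).indicator 1 y := by
  have hmem : x ∈ csupp C D c ↔ y ∈ csupp C D c := by
    rw [mem_csupp C, mem_csupp C]
    constructor
    · rintro ⟨_, rfl⟩; exact ⟨hy, hadj.symm⟩
    · rintro ⟨_, rfl⟩; exact ⟨hx, hadj⟩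
  by_cases hxc : x ∈ csupp C D c
  · rw [Set.indicator_of_mem hxc, Set.indicator_of_mem (hmem.mp hxc)]
    simp
  · rw [Set.indicator_of_notMem hxc, Set.indicator_of_notMem (fun h => hxc (hmem.mpr h))]

lemma indic_mem (hsym : ∀ s ∈ S, s⁻¹ ∈ S) (hgen : Subgroup.closure (S : Set Γ) = ⊤)
    (D : Finset (VV C))
    (c : ((schreierGraph C (S : Set Γ)).induce ((↑D : Set (VV C))ᶜ)).ConnectedComponent) :
    (csupp C D c).indicator 1 ∈ invariantModFinite C := by
  apply mem_invariant_of_gen C hsym hgen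
  intro s hs
  set f := (csupp C D c).indicator (1 : VV C → ZMod 2) with hf
  have hsub : (Function.support fun x => f (cosetRmul C s x) - f x) ⊆
      (↑D : Set (VV C)) ∪ (cosetRmul C s) ⁻¹' (↑D : Set (VV C)) := by
    intro x hx
    simp only [Function.mem_support] at hx
    by_contra hcon
    rw [Set.mem_union] at hcon
    push_neg at hcon
    obtain ⟨hxD, hxsD⟩ := hcon
    apply hx
    rw [sub_eq_zero]
    by_cases heq : cosetRmul C s x = x
    · rw [heq]
    · have hadj := adj_of_ne C hs heq
      have hadj' : ((schreierGraph C (S : Set Γ)).induce ((↑D : Set (VV C))ᶜ)).Adj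
          ⟨cosetRmul C s x, hxsD⟩ ⟨x, hxD⟩ := hadj.symm
      exact indic_eq_of_adj C hxsD hxD
        (SimpleGraph.ConnectedComponent.connectedComponentMk_eq_of_adj hadj')
  refine (Set.Finite.union D.finite_toSet ?_).subset hsub
  exact D.finite_toSet.preimage ((cosetRmulEquiv C s).injective.injOn)

open scoped Classical in
lemma sum_indic_apply {D : Finset (VV C)}
    (T : Finset ((schreierGraph C (S : Set Γ)).induce ((↑D : Set (VV C))ᶜ)).ConnectedComponent)
    {x : VV C} (hx : x ∈ ((↑D : Set (VV C))ᶜ)) :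
    (∑ c ∈ T, (csupp C D c).indicator (1 : VV C → ZMod 2)) x =
      if ((schreierGraph C (S : Set Γ)).induce ((↑D : Set (VV C))ᶜ)).connectedComponentMk ⟨x, hx⟩ ∈ T
        then 1 else 0 := by
  rw [Finset.sum_apply]
  classical
  have : ∀ c ∈ T, (csupp C D c).indicator (1 : VV C → ZMod 2) x =
      if c = ((schreierGraph C (S : Set Γ)).induce ((↑D : Set (VV C))ᶜ)).connectedComponentMk ⟨x, hx⟩ then 1 else 0 := by
    intro c _
    by_cases hc : c = ((schreierGraph C (S : Set Γ)).induce ((↑D : Set (VV C))ᶜ)).connectedComponentMk ⟨x, hx⟩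
    · rw [if_pos hc, Set.indicator_of_mem ((mem_csupp C).mpr ⟨hx, hc.symm⟩)]
      simp
    · rw [if_neg hc, Set.indicator_of_notMem]
      intro hmem
      obtain ⟨hx2, hc2⟩ := (mem_csupp C).mp hmem
      exact hc hc2.symm
  rw [Finset.sum_congr rfl this]
  simp [Finset.sum_ite_eq']

lemma key_fun {f : VV C → ZMod 2} (hf : f ∈ invariantModFinite C)
    (hsym : ∀ s ∈ S, s⁻¹ ∈ S) (hgen : Subgroup.closure (S : Set Γ) = ⊤)
    (D : Finset (VV C)) (hB : Bset C (S := S) f ⊆ ↑D) :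
    ∃ T : Finset ((schreierGraph C (S : Set Γ)).induce ((↑D : Set (VV C))ᶜ)).ConnectedComponent,
      (∀ c ∈ T, (csupp C D c).Infinite) ∧
      (Function.support (f - ∑ c ∈ T, (csupp C D c).indicator 1)).Finite := by
  classical
  haveI := components_finite C hsym hgen D
  haveI := Fintype.ofFinite
    ((schreierGraph C (S : Set Γ)).induce ((↑D : Set (VV C))ᶜ)).ConnectedComponent
  set T : Finset ((schreierGraph C (S : Set Γ)).induce ((↑D : Set (VV C))ᶜ)).ConnectedComponent :=
    Finset.univ.filter
    (fun c => (csupp C D c).Infinite ∧ ∀ x ∈ csupp C D c, f x = 1) with hT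
  refine ⟨T, fun c hc => ((Finset.mem_filter.mp hc).2).1, ?_⟩
  have hsub : Function.support (f - ∑ c ∈ T, (csupp C D c).indicator 1) ⊆
      (↑D : Set (VV C)) ∪
      ⋃ c ∈ Finset.univ.filter
        (fun c : ((schreierGraph C (S : Set Γ)).induce
          ((↑D : Set (VV C))ᶜ)).ConnectedComponent => (csupp C D c).Finite),
        csupp C D c := by
    intro x hx
    by_contra hcon
    rw [Set.mem_union] at hcon
    push_neg at hcon
    obtain ⟨hxD, hxU⟩ := hcon
    have hx' : x ∈ ((↑D : Set (VV C))ᶜ) := hxD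
    set c₀ := ((schreierGraph C (S : Set Γ)).induce ((↑D : Set (VV C))ᶜ)).connectedComponentMk ⟨x, hx'⟩ with hc₀
    have hxc₀ : x ∈ csupp C D c₀ := (mem_csupp C).mpr ⟨hx', rfl⟩
    have hinf : (csupp C D c₀).Infinite := by
      by_contra hfin
      rw [Set.not_infinite] at hfin
      exact hxU (Set.mem_biUnion (Finset.mem_coe.mpr
          (Finset.mem_filter.mpr ⟨Finset.mem_univ _, hfin⟩)) hxc₀)
    have hconst : ∀ y ∈ csupp C D c₀, f y = f x := by
      intro y hy
      obtain ⟨hy', hyc⟩ := (mem_csupp C).mp hy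
      exact constant_on_component C hsym hB ⟨y, hy'⟩ ⟨x, hx'⟩
        (SimpleGraph.ConnectedComponent.exact hyc)
    apply hx
    simp only [Function.mem_support, Pi.sub_apply, ne_eq, not_not] at hx ⊢
    rw [sum_indic_apply C T hx']
    by_cases hfx : f x = 1
    · have hc₀T : c₀ ∈ T := by
        rw [hT, Finset.mem_filter]
        exact ⟨Finset.mem_univ _, hinf, fun y hy => (hconst y hy).trans hfx⟩
      rw [if_pos hc₀T, hfx, sub_self]
    · have hfx0 : f x = 0 := by
        have : ∀ a : ZMod 2, a ≠ 1 → a = 0 := by decide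
        exact this _ hfx
      have hc₀T : c₀ ∉ T := by
        rw [hT, Finset.mem_filter]
        rintro ⟨-, -, hall⟩
        exact hfx (hall x hxc₀)
      rw [if_neg hc₀T, hfx0, sub_zero]
  refine (Set.Finite.union D.finite_toSet ?_).subset hsub
  refine Set.Finite.biUnion (Finset.filter _ Finset.univ).finite_toSet ?_
  intro c hc
  simp only [Finset.coe_filter, Set.mem_setOf_eq] at hc
  exact hc.2


variable (S) in
/-- The class in the quotient module of the indicator function of (the lift of) the support
of a connected component. -/
noncomputable def wvec (hsym : ∀ s ∈ S, s⁻¹ ∈ S) (hgen : Subgroup.closure (S : Set Γ) = ⊤)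
    (D : Finset (VV C))
    (c : ((schreierGraph C (S : Set Γ)).induce ((↑D : Set (VV C))ᶜ)).ConnectedComponent) :
    ↥(invariantModFinite C) ⧸ (finSupportSubmodule (VV C)).comap (invariantModFinite C).subtype :=
  Submodule.Quotient.mk ⟨(csupp C D c).indicator 1, indic_mem C hsym hgen D c⟩

lemma coe_sum_vec (hsym : ∀ s ∈ S, s⁻¹ ∈ S) (hgen : Subgroup.closure (S : Set Γ) = ⊤)
    (D : Finset (VV C)) {ι : Type*} (t : Finset ι) (g : ι → ZMod 2)
    (k : ι → ((schreierGraph C (S : Set Γ)).induce ((↑D : Set (VV C))ᶜ)).ConnectedComponent) :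
    (↑(∑ j ∈ t, g j • (⟨(csupp C D (k j)).indicator 1, indic_mem C hsym hgen D (k j)⟩ :
        ↥(invariantModFinite C))) : VV C → ZMod 2) =
      ∑ j ∈ t, g j • (csupp C D (k j)).indicator 1 := by
  show (invariantModFinite C).subtype _ = _
  rw [map_sum]
  exact Finset.sum_congr rfl fun j _ => by rw [map_smul]; rfl

lemma coe_sum_vec0 (hsym : ∀ s ∈ S, s⁻¹ ∈ S) (hgen : Subgroup.closure (S : Set Γ) = ⊤)
    (D : Finset (VV C))
    (T : Finset ((schreierGraph C (S : Set Γ)).induce ((↑D : Set (VV C))ᶜ)).ConnectedComponent) :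
    (↑(∑ c ∈ T, (⟨(csupp C D c).indicator 1, indic_mem C hsym hgen D c⟩ :
        ↥(invariantModFinite C))) : VV C → ZMod 2) =
      ∑ c ∈ T, (csupp C D c).indicator 1 := by
  show (invariantModFinite C).subtype _ = _
  rw [map_sum]
  rfl

lemma span_mem (hsym : ∀ s ∈ S, s⁻¹ ∈ S) (hgen : Subgroup.closure (S : Set Γ) = ⊤)
    (f : ↥(invariantModFinite C)) (D : Finset (VV C)) (hB : Bset C (S := S) ↑f ⊆ ↑D) :
    (Submodule.Quotient.mk f :
        ↥(invariantModFinite C) ⧸ (finSupportSubmodule (VV C)).comap (invariantModFinite C).subtype)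
      ∈ Submodule.span (ZMod 2) (Set.range
        (fun c : {c : ((schreierGraph C (S : Set Γ)).induce
            ((↑D : Set (VV C))ᶜ)).ConnectedComponent // (csupp C D c).Infinite} =>
          wvec C S hsym hgen D c.1)) := by
  obtain ⟨T, hTinf, hTfin⟩ := key_fun C f.2 hsym hgen D hB
  have hmk : (Submodule.Quotient.mk f :
      ↥(invariantModFinite C) ⧸ (finSupportSubmodule (VV C)).comap (invariantModFinite C).subtype)
      = ∑ c ∈ T, wvec C S hsym hgen D c := by
    have hsum : ∑ c ∈ T, wvec C S hsym hgen D c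
        = Submodule.Quotient.mk (∑ c ∈ T,
            (⟨(csupp C D c).indicator 1, indic_mem C hsym hgen D c⟩ : ↥(invariantModFinite C))) := by
      rw [← Submodule.mkQ_apply, map_sum]
      rfl
    rw [hsum, Submodule.Quotient.eq]
    refine Submodule.mem_comap.mpr ?_
    show (Function.support ((invariantModFinite C).subtype _)).Finite
    rw [map_sub]
    have hc0 := coe_sum_vec0 C hsym hgen D T
    have : (invariantModFinite C).subtype (∑ c ∈ T,
        (⟨(csupp C D c).indicator 1, indic_mem C hsym hgen D c⟩ : ↥(invariantModFinite C)))
        = ∑ c ∈ T, (csupp C D c).indicator 1 := hc0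
    rw [this]
    exact hTfin
  rw [hmk]
  exact Submodule.sum_mem _ fun c hc => Submodule.subset_span ⟨⟨c, hTinf c hc⟩, rfl⟩

lemma indep_wvec (hsym : ∀ s ∈ S, s⁻¹ ∈ S) (hgen : Subgroup.closure (S : Set Γ) = ⊤)
    (D : Finset (VV C)) :
    LinearIndependent (ZMod 2)
      (fun c : {c : ((schreierGraph C (S : Set Γ)).induce
          ((↑D : Set (VV C))ᶜ)).ConnectedComponent // (csupp C D c).Infinite} =>
        wvec C S hsym hgen D c.1) := by
  classical
  rw [linearIndependent_iff']
  intro t g hsum i hi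
  by_contra hgi
  have hg1 : g i = 1 := by
    have h2 : ∀ a : ZMod 2, a ≠ 0 → a = 1 := by decide
    exact h2 _ hgi
  set v : {c : ((schreierGraph C (S : Set Γ)).induce
      ((↑D : Set (VV C))ᶜ)).ConnectedComponent // (csupp C D c).Infinite} →
      ↥(invariantModFinite C) :=
    fun c => ⟨(csupp C D c.1).indicator 1, indic_mem C hsym hgen D c.1⟩ with hv
  have hmemN : (∑ j ∈ t, g j • v j) ∈
      (finSupportSubmodule (VV C)).comap (invariantModFinite C).subtype := by
    rw [← Submodule.Quotient.mk_eq_zero]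
    rw [← Submodule.mkQ_apply, map_sum]
    simpa only [map_smul, Submodule.mkQ_apply, hv, wvec] using hsum
  have hFfin : (Function.support (↑(∑ j ∈ t, g j • v j) : VV C → ZMod 2)).Finite :=
    Submodule.mem_comap.mp hmemN
  have hcoe : (↑(∑ j ∈ t, g j • v j) : VV C → ZMod 2)
      = ∑ j ∈ t, g j • (csupp C D j.1).indicator 1 :=
    coe_sum_vec C hsym hgen D t g (fun j => j.1)
  have hsubset : csupp C D i.1 ⊆ Function.support (↑(∑ j ∈ t, g j • v j) : VV C → ZMod 2) := by
    intro x hx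
    obtain ⟨hxD, hxc⟩ := (mem_csupp C).mp hx
    rw [Function.mem_support, hcoe, Finset.sum_apply]
    have hval : ∀ j ∈ t, (g j • (csupp C D j.1).indicator (1 : VV C → ZMod 2)) x
        = if j = i then 1 else 0 := by
      intro j _
      by_cases hj : j = i
      · subst hj
        rw [if_pos rfl, Pi.smul_apply, Set.indicator_of_mem hx]
        simp [hg1]
      · rw [if_neg hj, Pi.smul_apply, Set.indicator_of_notMem, smul_zero]
        intro hmem
        obtain ⟨hxD2, hxc2⟩ := (mem_csupp C).mp hmem
        apply hj
        apply Subtype.ext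
        rw [← hxc2, ← hxc]
    rw [Finset.sum_congr rfl hval, Finset.sum_ite_eq' t i (fun _ => (1 : ZMod 2)), if_pos hi]
    exact one_ne_zero
  exact i.2 (hFfin.subset hsubset)

end

/-- The dimension over `ℤ/2` of the space of `Γ`-invariant elements of `E(C\Γ)` (subsets of the
coset space modulo finite symmetric differences) equals the number of ends of the Schreier
graph `Sch(Γ,C,S)`, for any finite symmetric generating set `S` of `Γ`. -/
theorem stmt_19 {Γ : Type*} [Group Γ] (C : Subgroup Γ) (S : Finset Γ)
    (hsym : ∀ s ∈ S, s⁻¹ ∈ S) (hgen : Subgroup.closure (S : Set Γ) = ⊤) :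
    Module.rank (ZMod 2)
      (↥(invariantModFinite C) ⧸
        (finSupportSubmodule (Quotient (QuotientGroup.rightRel C))).comap
          (invariantModFinite C).subtype) =
    ⨆ D : Finset (Quotient (QuotientGroup.rightRel C)),
      Cardinal.mk {c : ((schreierGraph C (S : Set Γ)).induce
          ((↑D : Set (Quotient (QuotientGroup.rightRel C)))ᶜ)).ConnectedComponent //
        c.supp.Infinite} := by
  classical
  refine le_antisymm ?_ ?_
  · -- rank ≤ number of ends
    by_cases hfin : (⨆ D : Finset (Quotient (QuotientGroup.rightRel C)),
        Cardinal.mk {c : ((schreierGraph C (S : Set Γ)).induce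
          ((↑D : Set (Quotient (QuotientGroup.rightRel C)))ᶜ)).ConnectedComponent //
        c.supp.Infinite}) < Cardinal.aleph0
    · obtain ⟨n, hn⟩ := Cardinal.lt_aleph0.mp hfin
      rw [hn]
      apply rank_le
      intro s hs
      have hsur := Submodule.mkQ_surjective
        ((finSupportSubmodule (Quotient (QuotientGroup.rightRel C))).comap
          (invariantModFinite C).subtype)
      choose F hF using hsur
      set D : Finset (VV C) := s.sup (fun w => (Bset_finite C (S := S) (F w).2).toFinset) with hD
      have hB : ∀ w ∈ s, Bset C (S := S) ↑(F w) ⊆ ↑D := by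
        intro w hw x hx
        have h1 : x ∈ (Bset_finite C (S := S) (F w).2).toFinset :=
          (Set.Finite.mem_toFinset _).mpr hx
        exact Finset.mem_coe.mpr (Finset.mem_of_subset (Finset.le_sup hw) h1)
      set P := Submodule.span (ZMod 2) (Set.range
        (fun c : {c : ((schreierGraph C (S : Set Γ)).induce
            ((↑D : Set (VV C))ᶜ)).ConnectedComponent // (csupp C D c).Infinite} =>
          wvec C S hsym hgen D c.1)) with hP
      have hmem : ∀ w : ↥s, (↑w : ↥(invariantModFinite C) ⧸
          (finSupportSubmodule (Quotient (QuotientGroup.rightRel C))).comap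
            (invariantModFinite C).subtype) ∈ P := by
        intro w
        rw [← hF ↑w, Submodule.mkQ_apply]
        exact span_mem C hsym hgen (F ↑w) D (hB ↑w w.2)
      have hg : LinearIndependent (ZMod 2) (fun w : ↥s => (⟨↑w, hmem w⟩ : ↥P)) := by
        apply LinearIndependent.of_comp P.subtype
        exact hs
      have h1 : (Cardinal.mk ↥s) ≤ Module.rank (ZMod 2) ↥P := hg.cardinal_le_rank
      have h2 : Module.rank (ZMod 2) ↥P ≤ Cardinal.mk
          {c : ((schreierGraph C (S : Set Γ)).induce
            ((↑D : Set (VV C))ᶜ)).ConnectedComponent // (csupp C D c).Infinite} :=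
        (rank_span_le _).trans Cardinal.mk_range_le
      have e : {c : ((schreierGraph C (S : Set Γ)).induce
            ((↑D : Set (VV C))ᶜ)).ConnectedComponent // (csupp C D c).Infinite} ≃
          {c : ((schreierGraph C (S : Set Γ)).induce
            ((↑D : Set (VV C))ᶜ)).ConnectedComponent // c.supp.Infinite} :=
        Equiv.subtypeEquivRight (fun c =>
          Set.infinite_image_iff Subtype.val_injective.injOn)
      have h3 := (h1.trans h2).trans_eq (Cardinal.mk_congr e)
      have h4 : Cardinal.mk {c : ((schreierGraph C (S : Set Γ)).induce
            ((↑D : Set (VV C))ᶜ)).ConnectedComponent // c.supp.Infinite} ≤ (n : Cardinal) := by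
        rw [← hn]
        exact le_ciSup (Cardinal.bddAbove_range _) D
      have h5 := h3.trans h4
      rw [Cardinal.mk_coe_finset] at h5
      exact_mod_cast h5
    · refine le_trans ?_ (not_lt.mp hfin)
      haveI : Countable Γ := countable_of_gen hsym hgen
      haveI : Countable (VV C) := inferInstance
      haveI : ∀ D : Finset (VV C), Countable (((schreierGraph C (S : Set Γ)).induce
          ((↑D : Set (VV C))ᶜ)).ConnectedComponent) := fun D =>
        Function.Surjective.countable (f := ((schreierGraph C (S : Set Γ)).induce
          ((↑D : Set (VV C))ᶜ)).connectedComponentMk) (fun c => c.exists_rep)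
      set Φ : (Σ D : Finset (VV C), ((schreierGraph C (S : Set Γ)).induce
          ((↑D : Set (VV C))ᶜ)).ConnectedComponent) →
          (↥(invariantModFinite C) ⧸
            (finSupportSubmodule (Quotient (QuotientGroup.rightRel C))).comap
              (invariantModFinite C).subtype) :=
        fun p => wvec C S hsym hgen p.1 p.2 with hΦ
      have hspan : Submodule.span (ZMod 2) (Set.range Φ) = ⊤ := by
        rw [Submodule.eq_top_iff']
        intro w
        obtain ⟨f, rfl⟩ := Submodule.mkQ_surjective _ w
        have hBf := Bset_finite C (S := S) f.2
        have hB : Bset C (S := S) ↑f ⊆ ↑hBf.toFinset := by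
          rw [Set.Finite.coe_toFinset]
        have hsp := span_mem C hsym hgen f hBf.toFinset hB
        rw [Submodule.mkQ_apply]
        refine Submodule.span_mono ?_ hsp
        rintro _ ⟨c, rfl⟩
        exact ⟨⟨hBf.toFinset, c.1⟩, rfl⟩
      calc Module.rank (ZMod 2) _
          = Module.rank (ZMod 2) ↥(⊤ : Submodule (ZMod 2) _) := (rank_top _ _).symm
        _ = Module.rank (ZMod 2) ↥(Submodule.span (ZMod 2) (Set.range Φ)) := by rw [hspan]
        _ ≤ Cardinal.mk (Set.range Φ) := rank_span_le _
        _ ≤ Cardinal.mk (Σ D : Finset (VV C), ((schreierGraph C (S : Set Γ)).induce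
              ((↑D : Set (VV C))ᶜ)).ConnectedComponent) := Cardinal.mk_range_le
        _ ≤ Cardinal.aleph0 := Cardinal.mk_le_aleph0
  · -- number of ends ≤ rank
    apply ciSup_le'
    intro D
    have e : {c : ((schreierGraph C (S : Set Γ)).induce
          ((↑D : Set (VV C))ᶜ)).ConnectedComponent // c.supp.Infinite} ≃
        {c : ((schreierGraph C (S : Set Γ)).induce
          ((↑D : Set (VV C))ᶜ)).ConnectedComponent // (csupp C D c).Infinite} :=
      Equiv.subtypeEquivRight (fun c =>
        (Set.infinite_image_iff Subtype.val_injective.injOn).symm)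
    rw [Cardinal.mk_congr e]
    exact (indep_wvec C hsym hgen D).cardinal_le_rank
end
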